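/- arXiv:2506.06613 — 6 statements merged into one kernel-verified Lean document; each statement's English description precedes it below -/
import Mathlib

section
/- For d ∈ ℕ and parameters θ ≥ 0, γ ≥ 0, define h(σ) = σ^{−d} + (σ² + θ)^{−d/2} − 2^{1 + d/2} (2σ² + θ)^{−d/2} exp( −γ / (4σ² + 2θ) ) for σ > 0. Then for every σ > 0, h(σ/√2) ≤ 2^{(d/2 + 2)} · h(σ). In particular, h(σ) ≥ 0 for all σ > 0 and the ratio h(σ/√2)/h(σ) is bounded by 4·2^{d/2} uniformly over σ > 0 and θ, γ ≥ 0. -/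
open Real

/-- The function `h(σ)` from the Gaussian low-frequency analysis: up to a factor `(4π)^{d/2}`,
it is the squared `L²` distance `‖N(0, σ²I_d) − N(Δμ, (σ²+θ)I_d)‖₂²` with `γ = ‖Δμ‖₂²`. -/
noncomputable def hfun (d : ℕ) (θ γ : ℝ) (σ : ℝ) : ℝ :=
  σ ^ (-(d : ℝ)) + (σ ^ 2 + θ) ^ (-(d : ℝ) / 2)
    - 2 ^ (1 + (d : ℝ) / 2) * (2 * σ ^ 2 + θ) ^ (-(d : ℝ) / 2) *
        Real.exp (-γ / (4 * σ ^ 2 + 2 * θ))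

open MeasureTheory Set

-- pointwise positivity of the integrand
lemma pointwise_aux {a b t : ℝ} (ha : 0 < a) (hab : a ≤ b) (ht : 0 < t) :
    0 ≤ 3 * Real.exp (-(a*t)) + 6 * Real.exp (-(b*t))
      - Real.exp (-((2*b-a)*t)) - 8 * Real.exp (-((a+b)/2*t)) := by
  set x := Real.exp (-(a*t/2)) with hxdef
  set y := Real.exp (-(b*t/2)) with hydef
  have hx : 0 < x := Real.exp_pos _
  have hy : 0 < y := Real.exp_pos _
  have hyx : y ≤ x := Real.exp_le_exp.2 (by nlinarith)
  have e1 : Real.exp (-(a*t)) = x ^ 2 := by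
    rw [hxdef, sq, ← Real.exp_add]; ring_nf
  have e2 : Real.exp (-(b*t)) = y ^ 2 := by
    rw [hydef, sq, ← Real.exp_add]; ring_nf
  have e3 : Real.exp (-((a+b)/2*t)) = x * y := by
    rw [hxdef, hydef, ← Real.exp_add]; ring_nf
  have e4 : Real.exp (-((2*b-a)*t)) = y^4 / x^2 := by
    rw [eq_div_iff (by positivity), hxdef, hydef]
    rw [show (Real.exp (-(b*t/2)))^4 = Real.exp (-(b*t/2)) * Real.exp (-(b*t/2)) * Real.exp (-(b*t/2)) * Real.exp (-(b*t/2)) by ring,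
        show (Real.exp (-(a*t/2)))^2 = Real.exp (-(a*t/2)) * Real.exp (-(a*t/2)) by ring]
    rw [← Real.exp_add, ← Real.exp_add, ← Real.exp_add, ← Real.exp_add, ← Real.exp_add]
    ring_nf
  rw [e1, e2, e3, e4]
  have hfac : 3 * x^2 + 6 * y^2 - y^4/x^2 - 8*(x*y) = (x-y)^3 * (3*x+y) / x^2 := by
    field_simp; ring
  rw [hfac]
  exact div_nonneg (mul_nonneg (pow_nonneg (sub_nonneg.2 hyx) 3) (by positivity)) (by positivity)

lemma integrable_aux {p r : ℝ} (hp : 0 < p) (hr : 0 < r) :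
    IntegrableOn (fun t : ℝ => t ^ (p - 1) * Real.exp (-(r * t))) (Ioi (0:ℝ)) := by
  have h0 : IntegrableOn (fun t : ℝ => Real.exp (-t) * t ^ (p - 1)) (Ioi (0:ℝ)) :=
    Real.GammaIntegral_convergent hp
  have h1 : IntegrableOn (fun t : ℝ => Real.exp (-(r * t)) * (r * t) ^ (p - 1)) (Ioi (0:ℝ)) := by
    have h0' : IntegrableOn (fun t : ℝ => Real.exp (-t) * t ^ (p - 1)) (Ioi (r*0)) := by
      simpa [mul_zero] using h0
    exact (integrableOn_Ioi_comp_mul_left_iff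
      (fun t : ℝ => Real.exp (-t) * t ^ (p - 1)) 0 hr).2 h0'
  have h2 : IntegrableOn (fun t : ℝ =>
      r ^ (1 - p) * (Real.exp (-(r * t)) * (r * t) ^ (p - 1))) (Ioi (0:ℝ)) :=
    h1.const_mul _
  refine (integrableOn_congr_fun (fun t ht => ?_) measurableSet_Ioi).1 h2
  have ht' : (0:ℝ) < t := ht
  rw [Real.mul_rpow hr.le ht'.le]
  rw [show r ^ (1-p) * (Real.exp (-(r*t)) * (r ^ (p-1) * t ^ (p-1)))
      = (r ^ (1-p) * r ^ (p-1)) * (t ^ (p-1) * Real.exp (-(r*t))) by ring,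
    ← Real.rpow_add hr]
  norm_num


lemma star_aux {p a b : ℝ} (hp : 0 ≤ p) (ha : 0 < a) (hab : a ≤ b) :
    (2*b - a) ^ (-p) + 8 * ((a+b)/2) ^ (-p) ≤ 3 * a ^ (-p) + 6 * b ^ (-p) := by
  rcases eq_or_lt_of_le hp with hp0 | hp
  · simp [← hp0]; norm_num
  have hb : 0 < b := lt_of_lt_of_le ha hab
  have hc : 0 < 2*b - a := by linarith
  have hm : 0 < (a+b)/2 := by linarith
  have Ia := Real.integral_rpow_mul_exp_neg_mul_Ioi hp ha
  have Ib := Real.integral_rpow_mul_exp_neg_mul_Ioi hp hb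
  have Ic := Real.integral_rpow_mul_exp_neg_mul_Ioi hp hc
  have Im := Real.integral_rpow_mul_exp_neg_mul_Ioi hp hm
  have ia := integrable_aux hp ha
  have ib := integrable_aux hp hb
  have ic := integrable_aux hp hc
  have im := integrable_aux hp hm
  have key : 0 ≤ ∫ t in Ioi (0:ℝ),
      (3 * (t ^ (p-1) * Real.exp (-(a*t))) + 6 * (t ^ (p-1) * Real.exp (-(b*t)))
        - t ^ (p-1) * Real.exp (-((2*b-a)*t)) - 8 * (t ^ (p-1) * Real.exp (-((a+b)/2*t)))) := by
    apply setIntegral_nonneg measurableSet_Ioi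
    intro t ht
    have ht' : (0:ℝ) < t := ht
    have hptw := pointwise_aux ha hab ht'
    have htp : (0:ℝ) ≤ t ^ (p-1) := Real.rpow_nonneg ht'.le _
    nlinarith [mul_nonneg htp hptw]
  have esplit : (∫ t in Ioi (0:ℝ),
      (3 * (t ^ (p-1) * Real.exp (-(a*t))) + 6 * (t ^ (p-1) * Real.exp (-(b*t)))
        - t ^ (p-1) * Real.exp (-((2*b-a)*t)) - 8 * (t ^ (p-1) * Real.exp (-((a+b)/2*t)))))
      = 3 * ((1/a) ^ p * Real.Gamma p) + 6 * ((1/b) ^ p * Real.Gamma p)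
        - (1/(2*b-a)) ^ p * Real.Gamma p - 8 * ((1/((a+b)/2)) ^ p * Real.Gamma p) := by
    rw [integral_sub, integral_sub, integral_add, integral_const_mul, integral_const_mul,
        integral_const_mul, Ia, Ib, Ic, Im]
    · exact ia.const_mul 3
    · exact ib.const_mul 6
    · exact (ia.const_mul 3).add (ib.const_mul 6)
    · exact ic
    · exact ((ia.const_mul 3).add (ib.const_mul 6)).sub ic
    · exact im.const_mul 8
  rw [esplit] at key
  have hG : 0 < Real.Gamma p := Real.Gamma_pos_of_pos hp
  have ea : (1/a) ^ p = a ^ (-p) := by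
    rw [one_div, Real.inv_rpow ha.le, ← Real.rpow_neg ha.le]
  have eb : (1/b) ^ p = b ^ (-p) := by
    rw [one_div, Real.inv_rpow hb.le, ← Real.rpow_neg hb.le]
  have ec : (1/(2*b-a)) ^ p = (2*b-a) ^ (-p) := by
    rw [one_div, Real.inv_rpow hc.le, ← Real.rpow_neg hc.le]
  have em : (1/((a+b)/2)) ^ p = ((a+b)/2) ^ (-p) := by
    rw [one_div, Real.inv_rpow hm.le, ← Real.rpow_neg hm.le]
  rw [ea, eb, ec, em] at key
  nlinarith [key, hG, mul_pos hG (Real.rpow_pos_of_pos ha (-p))]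

lemma key_aux {p a b γ : ℝ} (hp : 0 ≤ p) (ha : 0 < a) (hab : a ≤ b) (hγ : 0 ≤ γ) :
    (a/2) ^ (-p) + (b - a/2) ^ (-p) - 2 ^ (1+p) * b ^ (-p) * Real.exp (-γ/(2*b))
      ≤ 2 ^ (p+2) * (a ^ (-p) + b ^ (-p)
          - 2 ^ (1+p) * (a+b) ^ (-p) * Real.exp (-γ/(2*(a+b)))) := by
  have hb : 0 < b := lt_of_lt_of_le ha hab
  have hc : 0 < 2*b - a := by linarith
  set P : ℝ := 2 ^ p with hP
  have hPpos : 0 < P := Real.rpow_pos_of_pos two_pos p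
  -- rewrite halved bases
  have half : ∀ c : ℝ, 0 < c → (c/2 : ℝ) ^ (-p) = P * c ^ (-p) := by
    intro c hc0
    rw [Real.div_rpow hc0.le (by norm_num), hP]
    rw [show ((2:ℝ) ^ p) = ((2:ℝ) ^ (-p))⁻¹ by
      rw [Real.rpow_neg (by norm_num), inv_inv]]
    field_simp
  have h1 : (a/2 : ℝ) ^ (-p) = P * a ^ (-p) := half a ha
  have h2 : (b - a/2 : ℝ) ^ (-p) = P * (2*b - a) ^ (-p) := by
    rw [show b - a/2 = (2*b-a)/2 by ring]; exact half _ hc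
  have h3 : ((a+b)/2 : ℝ) ^ (-p) = P * (a+b) ^ (-p) := half _ (by linarith)
  have h4 : (2:ℝ) ^ (1+p) = 2 * P := by
    rw [Real.rpow_add two_pos, Real.rpow_one]
  have h5 : (2:ℝ) ^ (p+2) = 4 * P := by
    rw [Real.rpow_add two_pos, show ((2:ℝ)^(2:ℝ)) = 4 by
      rw [show (2:ℝ) = ((2:ℕ):ℝ) by norm_num, Real.rpow_natCast]; norm_num]
    ring
  set A := a ^ (-p) with hA
  set B := b ^ (-p) with hB
  set D := (2*b - a) ^ (-p) with hD
  set M := (a+b) ^ (-p) with hM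
  set E := Real.exp (-γ/(2*(a+b))) with hE
  set E' := Real.exp (-γ/(2*b)) with hE'
  have hE1 : E ≤ 1 := Real.exp_le_one_iff.2 (by
    apply div_nonpos_of_nonpos_of_nonneg <;> linarith)
  have hE0 : 0 < E := Real.exp_pos _
  have hEsq : E^2 ≤ E' := by
    rw [hE, hE', sq, ← Real.exp_add]
    apply Real.exp_le_exp.2
    rw [← add_div, div_le_div_iff₀ (by linarith) (by linarith)]
    nlinarith
  have hBM : B ≤ P * M := by
    rw [← h3, hB]
    exact Real.rpow_le_rpow_of_nonpos (by linarith) (by linarith) (by linarith)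
  have hB0 : 0 < B := Real.rpow_pos_of_pos hb _
  have hstar : D + 8 * (P * M) ≤ 3 * A + 6 * B := by
    have := star_aux hp ha hab
    rw [h3] at this
    linarith
  have hcore : A + D - 2 * B * E' ≤ 4 * (A + B - 2 * (P * M) * E) := by
    nlinarith [mul_nonneg (mul_nonneg hB0.le (sub_nonneg.2 hE1)) (by linarith : (0:ℝ) ≤ 3 - E),
      mul_nonneg (sub_nonneg.2 hBM) (sub_nonneg.2 hE1)]
  calc (a/2) ^ (-p) + (b - a/2) ^ (-p) - 2 ^ (1+p) * B * E'
      = P * (A + D - 2 * B * E') := by rw [h1, h2, h4]; ring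
    _ ≤ P * (4 * (A + B - 2 * (P * M) * E)) :=
        mul_le_mul_of_nonneg_left hcore hPpos.le
    _ = 2 ^ (p+2) * (A + B - 2 ^ (1+p) * M * E) := by rw [h4, h5]; ring


lemma nonneg_aux {p a b γ : ℝ} (hp : 0 ≤ p) (ha : 0 < a) (hab : a ≤ b) (hγ : 0 ≤ γ) :
    0 ≤ a ^ (-p) + b ^ (-p) - 2 ^ (1+p) * (a+b) ^ (-p) * Real.exp (-γ/(2*(a+b))) := by
  have hb : 0 < b := lt_of_lt_of_le ha hab
  set u := a ^ (-p/2) with hu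
  set v := b ^ (-p/2) with hv
  have hu0 : 0 < u := Real.rpow_pos_of_pos ha _
  have hv0 : 0 < v := Real.rpow_pos_of_pos hb _
  have hu2 : u^2 = a ^ (-p) := by
    rw [hu, sq, ← Real.rpow_add ha]; norm_num
  have hv2 : v^2 = b ^ (-p) := by
    rw [hv, sq, ← Real.rpow_add hb]; norm_num
  have hE1 : Real.exp (-γ/(2*(a+b))) ≤ 1 := Real.exp_le_one_iff.2 (by
    apply div_nonpos_of_nonpos_of_nonneg <;> linarith)
  have hE0 : 0 < Real.exp (-γ/(2*(a+b))) := Real.exp_pos _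
  have hcross : 2 ^ (1+p) * (a+b) ^ (-p) ≤ 2 * (u * v) := by
    have hsq : Real.sqrt (a*b) ≤ (a+b)/2 := by
      rw [show (a+b)/2 = Real.sqrt (((a+b)/2)^2) by
        rw [Real.sqrt_sq (by linarith)]]
      apply Real.sqrt_le_sqrt; nlinarith [sq_nonneg (a-b)]
    have h3 : ((a+b)/2 : ℝ) ^ (-p) ≤ (Real.sqrt (a*b)) ^ (-p) :=
      Real.rpow_le_rpow_of_nonpos (Real.sqrt_pos.2 (by positivity)) hsq (by linarith)
    have h4 : (Real.sqrt (a*b)) ^ (-p) = u * v := by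
      rw [Real.sqrt_eq_rpow, ← Real.rpow_mul (by positivity : (0:ℝ) ≤ a*b),
        show (1/(2:ℝ))*(-p) = -p/2 by ring, Real.mul_rpow ha.le hb.le]
    have h5 : (2:ℝ) ^ (1+p) * (a+b) ^ (-p) = 2 * ((a+b)/2) ^ (-p) := by
      rw [Real.rpow_add two_pos, Real.rpow_one, Real.div_rpow (by linarith) (by norm_num)]
      rw [Real.rpow_neg (by linarith : (0:ℝ) ≤ a+b), Real.rpow_neg (by norm_num : (0:ℝ) ≤ 2)]
      field_simp
    rw [h5]
    nlinarith [h3, h4]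
  nlinarith [sq_nonneg (u - v), mul_pos hu0 hv0,
    mul_le_mul_of_nonneg_right hcross hE0.le,
    mul_le_mul_of_nonneg_left hE1 (by positivity : (0:ℝ) ≤ 2 * (u*v))]

/-- For every `σ > 0`, `h(σ/√2) ≤ 2^{d/2+2}·h(σ)`; in particular `h(σ) ≥ 0`, so the ratio
`h(σ/√2)/h(σ)` is bounded by `4·2^{d/2}` uniformly over `σ > 0` and `θ, γ ≥ 0`. -/
theorem hfun_ratio_bound (d : ℕ) (θ γ : ℝ) (hθ : 0 ≤ θ) (hγ : 0 ≤ γ) :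
    ∀ σ : ℝ, 0 < σ →
      hfun d θ γ (σ / Real.sqrt 2) ≤ (2 : ℝ) ^ ((d : ℝ) / 2 + 2) * hfun d θ γ σ
        ∧ 0 ≤ hfun d θ γ σ := by
  intro σ hσ
  have h2 : (0:ℝ) < Real.sqrt 2 := Real.sqrt_pos.2 two_pos
  have hτ : 0 < σ / Real.sqrt 2 := div_pos hσ h2
  have hp0 : (0:ℝ) ≤ (d:ℝ)/2 := by positivity
  have ha : (0:ℝ) < σ^2 := by positivity
  have hab : σ^2 ≤ σ^2 + θ := by linarith
  have hτ2 : (σ / Real.sqrt 2)^2 = σ^2/2 := by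
    rw [div_pow, Real.sq_sqrt two_pos.le]
  have pow_eq : ∀ x : ℝ, 0 < x → x ^ (-(d:ℝ)) = (x^2) ^ (-((d:ℝ)/2)) := by
    intro x hx
    rw [← Real.rpow_natCast x 2, ← Real.rpow_mul hx.le]
    congr 1
    push_cast; ring
  have e1 : hfun d θ γ σ = (σ^2) ^ (-((d:ℝ)/2)) + (σ^2+θ) ^ (-((d:ℝ)/2))
      - 2 ^ (1+(d:ℝ)/2) * (σ^2 + (σ^2+θ)) ^ (-((d:ℝ)/2))
        * Real.exp (-γ/(2*(σ^2+(σ^2+θ)))) := by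
    simp only [hfun, neg_div]
    rw [pow_eq σ hσ,
      show 2*σ^2+θ = σ^2+(σ^2+θ) by ring, show 4*σ^2+2*θ = 2*(σ^2+(σ^2+θ)) by ring]
  have e2 : hfun d θ γ (σ/Real.sqrt 2) = (σ^2/2) ^ (-((d:ℝ)/2))
      + ((σ^2+θ) - σ^2/2) ^ (-((d:ℝ)/2))
      - 2 ^ (1+(d:ℝ)/2) * (σ^2+θ) ^ (-((d:ℝ)/2)) * Real.exp (-γ/(2*(σ^2+θ))) := by
    simp only [hfun, neg_div]
    rw [pow_eq _ hτ, hτ2,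
      show σ^2/2 + θ = (σ^2+θ) - σ^2/2 by ring, show 2*(σ^2/2)+θ = σ^2+θ by ring,
      show 4*(σ^2/2)+2*θ = 2*(σ^2+θ) by ring]
  constructor
  · rw [e1, e2, show (d:ℝ)/2 + 2 = (d:ℝ)/2 + 2 from rfl]
    exact key_aux hp0 ha hab hγ
  · rw [e1]
    exact nonneg_aux hp0 ha hab hγ
end

section
/- Let d ∈ ℕ, T > 0, Δ ≥ 0 with 8Δ ≤ T. Let U be the uniform density on the axis-aligned box ∏_{i=1}^d [a_i, b_i] and U' the uniform density on ∏_{i=1}^d [a_i', b_i'], where for every i ∈ [d]: b_i − a_i ≥ T/2, b_i' − a_i' ≥ T/2, |a_i − a_i'| ≤ Δ and |b_i − b_i'| ≤ Δ. Then TV(U, U') ≤ 8dΔ/T. -/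
open MeasureTheory

/-- The axis-aligned box `∏ᵢ [aᵢ, bᵢ]` in `ℝ^d`. -/
def boxSet {d : ℕ} (a b : Fin d → ℝ) : Set (EuclideanSpace ℝ (Fin d)) :=
  {x | ∀ i, x i ∈ Set.Icc (a i) (b i)}

/-- The uniform density on the box `∏ᵢ [aᵢ, bᵢ]`. -/
noncomputable def boxUnifPdf {d : ℕ} (a b : Fin d → ℝ)
    (x : EuclideanSpace ℝ (Fin d)) : ℝ :=
  Set.indicator (boxSet a b) (fun _ => ((volume (boxSet a b)).toReal)⁻¹) x

lemma boxSet_eq {d : ℕ} (a b : Fin d → ℝ) :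
    boxSet a b = ⇑((MeasurableEquiv.toLp 2 (Fin d → ℝ)).symm) ⁻¹'
      (Set.univ.pi fun i => Set.Icc (a i) (b i)) := by
  ext x
  simp only [boxSet, Set.mem_setOf_eq, Set.mem_preimage, Set.mem_pi, Set.mem_univ,
    forall_true_left, Set.mem_Icc]
  rfl

lemma measurableSet_boxSet {d : ℕ} (a b : Fin d → ℝ) : MeasurableSet (boxSet a b) := by
  rw [boxSet_eq]
  exact (MeasurableSet.univ_pi fun i => measurableSet_Icc).preimage
    ((MeasurableEquiv.toLp 2 (Fin d → ℝ)).symm).measurable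

lemma volume_boxSet {d : ℕ} (a b : Fin d → ℝ) :
    volume (boxSet a b) = ∏ i, ENNReal.ofReal (b i - a i) := by
  rw [boxSet_eq,
    (EuclideanSpace.volume_preserving_symm_measurableEquiv_toLp (Fin d)).measure_preimage
      ((MeasurableSet.univ_pi fun i => measurableSet_Icc).nullMeasurableSet),
    volume_pi_pi]
  simp [Real.volume_Icc]

lemma volume_boxSet_ne_top {d : ℕ} (a b : Fin d → ℝ) : volume (boxSet a b) ≠ ⊤ := by
  rw [volume_boxSet]
  exact (ENNReal.prod_lt_top fun i _ => ENNReal.ofReal_lt_top).ne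

lemma volume_boxSet_toReal {d : ℕ} (a b : Fin d → ℝ) (h : ∀ i, 0 ≤ b i - a i) :
    (volume (boxSet a b)).toReal = ∏ i, (b i - a i) := by
  rw [volume_boxSet, ENNReal.toReal_prod]
  exact Finset.prod_congr rfl fun i _ => ENNReal.toReal_ofReal (h i)

lemma boxSet_inter {d : ℕ} (a b a' b' : Fin d → ℝ) :
    boxSet a b ∩ boxSet a' b' =
      boxSet (fun i => max (a i) (a' i)) (fun i => min (b i) (b' i)) := by
  ext x
  simp only [boxSet, Set.mem_inter_iff, Set.mem_setOf_eq, Set.mem_Icc, max_le_iff, le_min_iff]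
  constructor
  · rintro ⟨h1, h2⟩ i; exact ⟨⟨(h1 i).1, (h2 i).1⟩, (h1 i).2, (h2 i).2⟩
  · intro h; exact ⟨fun i => ⟨(h i).1.1, (h i).2.1⟩, fun i => ⟨(h i).1.2, (h i).2.2⟩⟩

lemma integrable_boxUnifPdf {d : ℕ} (a b : Fin d → ℝ) :
    Integrable (boxUnifPdf a b) := by
  exact (integrable_indicator_iff (measurableSet_boxSet a b)).2
    (integrableOn_const (volume_boxSet_ne_top a b))

lemma integral_boxUnifPdf {d : ℕ} (a b : Fin d → ℝ)
    (h : (volume (boxSet a b)).toReal ≠ 0) :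
    ∫ x, boxUnifPdf a b x = 1 := by
  simp only [boxUnifPdf]
  rw [integral_indicator_const _ (measurableSet_boxSet a b), smul_eq_mul,
    measureReal_def, mul_inv_cancel₀ h]

/-- If two axis-aligned boxes have side lengths at least `T/2` and endpoints within `Δ`
of each other (with `8Δ ≤ T`), then the TV distance of their uniform densities is at
most `8dΔ/T`. -/
theorem tv_between_close_boxes {d : ℕ} (T Δ : ℝ) (hT : 0 < T) (hΔ : 0 ≤ Δ)
    (hΔT : 8 * Δ ≤ T) (a b a' b' : Fin d → ℝ)
    (hab : ∀ i, T / 2 ≤ b i - a i) (hab' : ∀ i, T / 2 ≤ b' i - a' i)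
    (ha : ∀ i, |a i - a' i| ≤ Δ) (hb : ∀ i, |b i - b' i| ≤ Δ) :
    (1 / 2) * ∫ x, |boxUnifPdf a b x - boxUnifPdf a' b' x| ≤ 8 * d * Δ / T := by
  have hT2 : (0:ℝ) < T / 2 := by linarith
  have hside : ∀ i, 0 < b i - a i := fun i => lt_of_lt_of_le hT2 (hab i)
  have hside' : ∀ i, 0 < b' i - a' i := fun i => lt_of_lt_of_le hT2 (hab' i)
  set V : ℝ := ∏ i, (b i - a i) with hVdef
  set V' : ℝ := ∏ i, (b' i - a' i) with hV'def
  set c : Fin d → ℝ := fun i => min (b i) (b' i) - max (a i) (a' i) with hcdef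
  set δ : ℝ := 4 * Δ / T with hδdef
  have hδ0 : 0 ≤ δ := by positivity
  have hδhalf : δ ≤ 1 / 2 := by rw [hδdef, div_le_iff₀ hT]; linarith
  -- per-coordinate bounds on the intersection sides
  have hci : ∀ i, (1 - δ) * (b i - a i) ≤ c i := by
    intro i
    have hbi := abs_le.1 (hb i); have hai := abs_le.1 (ha i)
    have h1 : b i - Δ ≤ min (b i) (b' i) := le_min (by linarith) (by linarith)
    have h2 : max (a i) (a' i) ≤ a i + Δ := max_le (by linarith) (by linarith)
    have hδs : 2 * Δ ≤ δ * (b i - a i) := by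
      rw [hδdef, div_mul_eq_mul_div, le_div_iff₀ hT]
      nlinarith [mul_nonneg hΔ (by linarith [hab i] : (0:ℝ) ≤ 2 * (b i - a i) - T)]
    have : c i = min (b i) (b' i) - max (a i) (a' i) := rfl
    nlinarith
  have hci' : ∀ i, (1 - δ) * (b' i - a' i) ≤ c i := by
    intro i
    have hbi := abs_le.1 (hb i); have hai := abs_le.1 (ha i)
    have h1 : b' i - Δ ≤ min (b i) (b' i) := le_min (by linarith) (by linarith)
    have h2 : max (a i) (a' i) ≤ a' i + Δ := max_le (by linarith) (by linarith)
    have hδs : 2 * Δ ≤ δ * (b' i - a' i) := by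
      rw [hδdef, div_mul_eq_mul_div, le_div_iff₀ hT]
      nlinarith [mul_nonneg hΔ (by linarith [hab' i] : (0:ℝ) ≤ 2 * (b' i - a' i) - T)]
    have : c i = min (b i) (b' i) - max (a i) (a' i) := rfl
    nlinarith
  have hcpos : ∀ i, 0 ≤ c i := fun i =>
    le_trans (mul_nonneg (by linarith) (hside i).le) (hci i)
  set W : ℝ := ∏ i, c i with hWdef
  set M : ℝ := max V V' with hMdef
  have hV0 : 0 < V := Finset.prod_pos fun i _ => hside i
  have hV'0 : 0 < V' := Finset.prod_pos fun i _ => hside' i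
  have hM0 : 0 < M := lt_of_lt_of_le hV0 (le_max_left _ _)
  -- W ≥ (1-δ)^d * M
  have prod_bound : ∀ (s : Fin d → ℝ), (∀ i, (1 - δ) * s i ≤ c i) → (∀ i, 0 < s i) →
      (1 - δ) ^ d * ∏ i, s i ≤ W := by
    intro s hs hs0
    calc (1 - δ) ^ d * ∏ i, s i = ∏ i, ((1 - δ) * s i) := by
          rw [Finset.prod_mul_distrib, Finset.prod_const, Finset.card_univ, Fintype.card_fin]
      _ ≤ ∏ i, c i := Finset.prod_le_prod
          (fun i _ => mul_nonneg (by linarith) (hs0 i).le) (fun i _ => hs i)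
  have hWmax : (1 - δ) ^ d * M ≤ W := by
    rcases max_cases V V' with ⟨h1, _⟩ | ⟨h1, _⟩
    · rw [hMdef, h1]; exact prod_bound _ hci hside
    · rw [hMdef, h1]; exact prod_bound _ hci' hside'
  have hbern : 1 - (d : ℝ) * δ ≤ (1 - δ) ^ d := by
    calc 1 - (d : ℝ) * δ = 1 + (d : ℝ) * (-δ) := by ring
      _ ≤ (1 + -δ) ^ d := one_add_mul_le_pow (by linarith) d
      _ = (1 - δ) ^ d := by ring_nf
  have hWM : 1 - (d : ℝ) * δ ≤ W * M⁻¹ := by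
    rw [← div_eq_mul_inv, le_div_iff₀ hM0]
    calc (1 - (d : ℝ) * δ) * M ≤ (1 - δ) ^ d * M :=
          mul_le_mul_of_nonneg_right hbern hM0.le
      _ ≤ W := hWmax
  -- measure-theoretic facts
  have hVR : (volume (boxSet a b)).toReal = V :=
    volume_boxSet_toReal a b fun i => (hside i).le
  have hVR' : (volume (boxSet a' b')).toReal = V' :=
    volume_boxSet_toReal a' b' fun i => (hside' i).le
  have hfi := integrable_boxUnifPdf a b
  have hgi := integrable_boxUnifPdf a' b'
  have hif : ∫ x, boxUnifPdf a b x = 1 := integral_boxUnifPdf a b (by rw [hVR]; exact hV0.ne')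
  have hig : ∫ x, boxUnifPdf a' b' x = 1 :=
    integral_boxUnifPdf a' b' (by rw [hVR']; exact hV'0.ne')
  have hfnn : ∀ x, 0 ≤ boxUnifPdf a b x := fun x =>
    Set.indicator_nonneg (fun _ _ => inv_nonneg.2 ENNReal.toReal_nonneg) x
  have hgnn : ∀ x, 0 ≤ boxUnifPdf a' b' x := fun x =>
    Set.indicator_nonneg (fun _ _ => inv_nonneg.2 ENNReal.toReal_nonneg) x
  have hmini : Integrable (fun x => min (boxUnifPdf a b x) (boxUnifPdf a' b' x)) := hfi.inf hgi
  -- lower bound on the integral of the min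
  have hinterMeas : MeasurableSet (boxSet a b ∩ boxSet a' b') :=
    (measurableSet_boxSet a b).inter (measurableSet_boxSet a' b')
  have hindInt : Integrable (Set.indicator (boxSet a b ∩ boxSet a' b') (fun _ => M⁻¹)) :=
    (integrable_indicator_iff hinterMeas).2 (integrableOn_const (ne_of_lt
      (lt_of_le_of_lt (measure_mono Set.inter_subset_left)
        (volume_boxSet_ne_top a b).lt_top)))
  have hptwise : ∀ x, Set.indicator (boxSet a b ∩ boxSet a' b') (fun _ => M⁻¹) x ≤
      min (boxUnifPdf a b x) (boxUnifPdf a' b' x) := by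
    intro x
    by_cases hx : x ∈ boxSet a b ∩ boxSet a' b'
    · rw [Set.indicator_of_mem hx]
      refine le_min ?_ ?_
      · show M⁻¹ ≤ boxUnifPdf a b x
        rw [boxUnifPdf, Set.indicator_of_mem hx.1, hVR]
        exact inv_anti₀ hV0 (le_max_left _ _)
      · show M⁻¹ ≤ boxUnifPdf a' b' x
        rw [boxUnifPdf, Set.indicator_of_mem hx.2, hVR']
        exact inv_anti₀ hV'0 (le_max_right _ _)
    · rw [Set.indicator_of_notMem hx]
      exact le_min (hfnn x) (hgnn x)
  have hindVal : ∫ x, Set.indicator (boxSet a b ∩ boxSet a' b') (fun _ => M⁻¹) x = W * M⁻¹ := by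
    rw [integral_indicator_const _ hinterMeas, smul_eq_mul, boxSet_inter,
      measureReal_def, volume_boxSet_toReal _ _ hcpos]
  have hlower : W * M⁻¹ ≤ ∫ x, min (boxUnifPdf a b x) (boxUnifPdf a' b' x) := by
    rw [← hindVal]
    exact integral_mono hindInt hmini hptwise
  -- |f - g| = f + g - 2 min
  have habs_eq : ∫ x, |boxUnifPdf a b x - boxUnifPdf a' b' x| =
      2 - 2 * ∫ x, min (boxUnifPdf a b x) (boxUnifPdf a' b' x) := by
    have h1 : ∀ x, |boxUnifPdf a b x - boxUnifPdf a' b' x| =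
        boxUnifPdf a b x + boxUnifPdf a' b' x -
          2 * min (boxUnifPdf a b x) (boxUnifPdf a' b' x) := by
      intro x
      rcases le_total (boxUnifPdf a b x) (boxUnifPdf a' b' x) with h | h
      · rw [min_eq_left h, abs_of_nonpos (by linarith)]; ring
      · rw [min_eq_right h, abs_of_nonneg (by linarith)]; ring
    rw [show (fun x => |boxUnifPdf a b x - boxUnifPdf a' b' x|) =
        fun x => boxUnifPdf a b x + boxUnifPdf a' b' x -
          2 * min (boxUnifPdf a b x) (boxUnifPdf a' b' x) from funext h1]
    have hsum : Integrable (fun x => boxUnifPdf a b x + boxUnifPdf a' b' x) := hfi.add hgi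
    have h2min : Integrable (fun x =>
        2 * min (boxUnifPdf a b x) (boxUnifPdf a' b' x)) := hmini.const_mul 2
    rw [integral_sub hsum h2min, integral_add hfi hgi, integral_const_mul, hif, hig]
    ring
  -- final arithmetic
  have hdd : (d : ℝ) * δ = 4 * d * Δ / T := by rw [hδdef]; ring
  have h48 : 4 * (d : ℝ) * Δ / T ≤ 8 * d * Δ / T := by
    gcongr
    nlinarith [mul_nonneg (Nat.cast_nonneg d : (0:ℝ) ≤ d) hΔ]
  rw [habs_eq]
  linarith
end

section
/- Let S, S' ⊆ ℝ^d be Lebesgue-measurable sets with 0 < Vol(S) < ∞ and 0 < Vol(S') < ∞, and let U_S = 1_S / Vol(S) and U_{S'} = 1_{S'} / Vol(S') be the corresponding uniform densities. Then TV(U_S, U_{S'}) ≤ 1 − Vol(S ∩ S') / Vol(S ∪ S'). -/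
open MeasureTheory

/-- The TV distance between the uniform densities on two sets `S, S'` of positive finite
volume is at most `1 − Vol(S ∩ S')/Vol(S ∪ S')`. -/
theorem tv_uniform_le_one_sub_jaccard {d : ℕ}
    (S S' : Set (EuclideanSpace ℝ (Fin d)))
    (hS : MeasurableSet S) (hS' : MeasurableSet S')
    (hS0 : 0 < volume S) (hSfin : volume S < ⊤)
    (hS'0 : 0 < volume S') (hS'fin : volume S' < ⊤) :
    (1 / 2) * ∫ x, |Set.indicator S (fun _ => ((volume S).toReal)⁻¹) x
        - Set.indicator S' (fun _ => ((volume S').toReal)⁻¹) x|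
      ≤ 1 - (volume (S ∩ S')).toReal / (volume (S ∪ S')).toReal := by
  set a : ℝ := ((volume S).toReal)⁻¹ with ha
  set b : ℝ := ((volume S').toReal)⁻¹ with hb
  have hUfin : volume (S ∪ S') < ⊤ := measure_union_lt_top hSfin hS'fin
  have hU0 : 0 < volume (S ∪ S') := hS0.trans_le (measure_mono Set.subset_union_left)
  set p : ℝ := ((volume (S ∪ S')).toReal)⁻¹ with hp
  have hSpos : (0:ℝ) < (volume S).toReal := ENNReal.toReal_pos hS0.ne' hSfin.ne
  have hS'pos : (0:ℝ) < (volume S').toReal := ENNReal.toReal_pos hS'0.ne' hS'fin.ne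
  have hUpos : (0:ℝ) < (volume (S ∪ S')).toReal := ENNReal.toReal_pos hU0.ne' hUfin.ne
  have hapos : 0 < a := inv_pos.2 hSpos
  have hbpos : 0 < b := inv_pos.2 hS'pos
  have hppos : 0 < p := inv_pos.2 hUpos
  have hpa : p ≤ a := by
    apply inv_anti₀ hSpos
    exact ENNReal.toReal_mono hUfin.ne (measure_mono Set.subset_union_left)
  have hpb : p ≤ b := by
    apply inv_anti₀ hS'pos
    exact ENNReal.toReal_mono hUfin.ne (measure_mono Set.subset_union_right)
  -- integrability
  have intf : Integrable (Set.indicator S (fun _ => a)) volume :=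
    (integrable_indicator_iff hS).2 (integrableOn_const hSfin.ne)
  have intg : Integrable (Set.indicator S' (fun _ => b)) volume :=
    (integrable_indicator_iff hS').2 (integrableOn_const hS'fin.ne)
  have hIfin : volume (S ∩ S') < ⊤ :=
    (measure_mono Set.inter_subset_left).trans_lt hSfin
  have inth : Integrable (Set.indicator (S ∩ S') (fun _ => p)) volume :=
    (integrable_indicator_iff (hS.inter hS')).2 (integrableOn_const hIfin.ne)
  -- pointwise bound
  have hpt : ∀ x, |Set.indicator S (fun _ => a) x - Set.indicator S' (fun _ => b) x|
      ≤ Set.indicator S (fun _ => a) x + Set.indicator S' (fun _ => b) x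
        - 2 * Set.indicator (S ∩ S') (fun _ => p) x := by
    intro x
    by_cases hx : x ∈ S <;> by_cases hx' : x ∈ S' <;>
      simp [Set.indicator_apply, hx, hx', abs_sub_le_iff, abs_le] <;>
      (try constructor) <;> nlinarith
  -- integrate
  have hle : ∫ x, |Set.indicator S (fun _ => a) x - Set.indicator S' (fun _ => b) x|
      ≤ ∫ x, (Set.indicator S (fun _ => a) x + Set.indicator S' (fun _ => b) x
        - 2 * Set.indicator (S ∩ S') (fun _ => p) x) := by
    apply integral_mono ((intf.sub intg).abs) ((intf.add intg).sub (inth.const_mul 2)) hpt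
  have intfg : Integrable (fun x => Set.indicator S (fun _ => a) x
      + Set.indicator S' (fun _ => b) x) volume := intf.add intg
  have inth2 : Integrable (fun x => 2 * Set.indicator (S ∩ S') (fun _ => p) x) volume :=
    inth.const_mul 2
  have hint : ∫ x, (Set.indicator S (fun _ => a) x + Set.indicator S' (fun _ => b) x
        - 2 * Set.indicator (S ∩ S') (fun _ => p) x)
      = 2 - 2 * ((volume (S ∩ S')).toReal * p) := by
    rw [integral_sub intfg inth2, integral_add intf intg,
      integral_const_mul, integral_indicator_const _ hS, integral_indicator_const _ hS',
      integral_indicator_const _ (hS.inter hS')]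
    rw [smul_eq_mul, smul_eq_mul, smul_eq_mul, ha, hb]
    simp only [Measure.real]
    rw [mul_inv_cancel₀ hSpos.ne', mul_inv_cancel₀ hS'pos.ne']
    ring
  have : (volume (S ∩ S')).toReal / (volume (S ∪ S')).toReal
      = (volume (S ∩ S')).toReal * p := by rw [hp, div_eq_mul_inv]
  rw [this]
  linarith [hle.trans_eq hint]
end

section
/- (Water-filling bound on the L¹ norm via the L² norm.) Let X ⊆ ℝ^d be measurable, let f, g ∈ L²(X) with g(x) ≥ 0 and |f(x)| ≤ g(x) for all x ∈ X, and let A ⊆ X be a Lebesgue-measurable set with Vol(A) < ∞ and g integrable on X∖A, such that: (i) Vol(A) · (inf_{x∈A} g(x))² + ∫_{X∖A} g(x)² dx = ‖f‖₂², and (ii) g(x) ≥ g(y) for all x ∈ A and all y ∈ X∖A. Then ‖f‖₁ ≤ Vol(A) · inf_{x∈A} g(x) + ∫_{X∖A} g(x) dx. -/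
open MeasureTheory

/-- Water-filling bound on the `L¹` norm via the `L²` norm: if `|f| ≤ g` on `X`, and
`A ⊆ X` is a "water-filling" set for the level of `g` matching the `L²` energy of `f`
(i.e. `Vol(A)·(inf_A g)² + ∫_{X∖A} g² = ‖f‖₂²` with `g` larger on `A` than off `A`),
then `‖f‖₁ ≤ Vol(A)·inf_A g + ∫_{X∖A} g`. -/
theorem water_filling_l1_bound {d : ℕ}
    (X A : Set (EuclideanSpace ℝ (Fin d)))
    (hX : MeasurableSet X) (hA : MeasurableSet A) (hAX : A ⊆ X)
    (f g : EuclideanSpace ℝ (Fin d) → ℝ)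
    (hf2 : MemLp f 2 (volume.restrict X)) (hg2 : MemLp g 2 (volume.restrict X))
    (hg0 : ∀ x ∈ X, 0 ≤ g x) (hfg : ∀ x ∈ X, |f x| ≤ g x)
    (hAfin : volume A < ⊤) (hgint : IntegrableOn g (X \ A))
    (hwater : (volume A).toReal * (sInf (g '' A)) ^ 2 + (∫ x in X \ A, g x ^ 2)
      = ∫ x in X, f x ^ 2)
    (hmono : ∀ x ∈ A, ∀ y ∈ X \ A, g y ≤ g x) :
    (∫⁻ x in X, ENNReal.ofReal |f x|)
      ≤ ENNReal.ofReal ((volume A).toReal * sInf (g '' A) + ∫ x in X \ A, g x) := by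
  set m := sInf (g '' A) with hm
  set V := (volume A).toReal with hV
  have hXA : MeasurableSet (X \ A) := hX.diff hA
  have hunion : A ∪ (X \ A) = X := Set.union_diff_cancel hAX
  have hdisj : Disjoint A (X \ A) := disjoint_sdiff_self_right
  haveI : IsFiniteMeasure (volume.restrict A) :=
    ⟨by simpa [Measure.restrict_apply_univ] using hAfin⟩
  -- measurability of |f| on subsets
  have hfaestX : AEStronglyMeasurable f (volume.restrict X) := hf2.aestronglyMeasurable
  have hfabsX : AEStronglyMeasurable (fun x => |f x|) (volume.restrict X) := by
    simpa [Real.norm_eq_abs] using hfaestX.norm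
  -- integrability of squares
  have hfsqX : IntegrableOn (fun x => f x ^ 2) X := hf2.integrable_sq
  have hgsqX : IntegrableOn (fun x => g x ^ 2) X := hg2.integrable_sq
  have hfsqA : IntegrableOn (fun x => f x ^ 2) A := hfsqX.mono_set hAX
  have hfsqB : IntegrableOn (fun x => f x ^ 2) (X \ A) := hfsqX.mono_set Set.diff_subset
  have hgsqB : IntegrableOn (fun x => g x ^ 2) (X \ A) := hgsqX.mono_set Set.diff_subset
  -- |f| integrable on A
  have hfA2 : MemLp f 2 (volume.restrict A) :=
    hf2.mono_measure (Measure.restrict_mono hAX le_rfl)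
  have hfAint : IntegrableOn (fun x => |f x|) A := by
    have := (memLp_one_iff_integrable.mp
      (hfA2.mono_exponent (by norm_num)))
    exact this.abs
  -- |f| integrable on X \ A
  have hfBint : IntegrableOn (fun x => |f x|) (X \ A) := by
    refine Integrable.mono hgint (hfabsX.mono_measure (Measure.restrict_mono Set.diff_subset le_rfl)) ?_
    refine (ae_restrict_iff' hXA).2 (Filter.Eventually.of_forall fun x hx => ?_)
    have h1 := hfg x hx.1
    have h2 := hg0 x hx.1
    simp only [Real.norm_eq_abs, abs_abs]
    rw [abs_of_nonneg h2]
    exact h1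
  have hfXint : IntegrableOn (fun x => |f x|) X := by
    rw [← hunion]; exact hfAint.union hfBint
  -- split ∫ f² over X
  have hsplit_sq : ∫ x in X, f x ^ 2 = (∫ x in A, f x ^ 2) + ∫ x in X \ A, f x ^ 2 := by
    have h := setIntegral_union hdisj hXA hfsqA hfsqB
    rwa [hunion] at h
  have hsplit_abs : ∫ x in X, |f x| = (∫ x in A, |f x|) + ∫ x in X \ A, |f x| := by
    have h := setIntegral_union hdisj hXA hfAint hfBint
    rwa [hunion] at h
  -- nonneg of V
  have hV0 : 0 ≤ V := ENNReal.toReal_nonneg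
  -- main real inequality
  have hkey : ∫ x in X, |f x| ≤ V * m + ∫ x in X \ A, g x := by
    rcases Set.eq_empty_or_nonempty A with hAe | hAne
    · -- A empty
      subst hAe
      have hVe : V = 0 := by simp [hV]
      rw [hVe, zero_mul, zero_add, Set.diff_empty]
      rw [Set.diff_empty] at hgint
      exact setIntegral_mono_on hfXint hgint hX fun x hx => hfg x hx
    · -- A nonempty
      have hm0 : 0 ≤ m := le_csInf (hAne.image g) (by
        rintro b ⟨x, hx, rfl⟩; exact hg0 x (hAX hx))
      have hmle : ∀ x ∈ A, m ≤ g x := fun x hx =>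
        csInf_le ⟨0, by rintro b ⟨y, hy, rfl⟩; exact hg0 y (hAX hy)⟩ ⟨x, hx, rfl⟩
      have hgB : ∀ y ∈ X \ A, g y ≤ m := fun y hy =>
        le_csInf (hAne.image g) (by rintro b ⟨x, hx, rfl⟩; exact hmono x hx y hy)
      rcases eq_or_lt_of_le hm0 with hm00 | hmpos
      · -- m = 0 : g = 0 on X \ A, so ∫ f² = 0, f = 0 a.e.
        have hgB0 : ∀ y ∈ X \ A, g y = 0 := by
          intro y hy
          have h := hgB y hy
          rw [← hm00] at h
          exact le_antisymm h (hg0 y hy.1)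
        have hE : ∫ x in X \ A, g x ^ 2 = 0 := by
          rw [setIntegral_eq_zero_iff_of_nonneg_ae ?_ hgsqB]
          · exact (ae_restrict_iff' hXA).2 (Filter.Eventually.of_forall fun x hx => by
              simp [hgB0 x hx])
          · exact (ae_restrict_iff' hXA).2 (Filter.Eventually.of_forall fun x hx =>
              sq_nonneg _)
        have hfsq0 : ∫ x in X, f x ^ 2 = 0 := by
          rw [← hwater, hE, ← hm00]; ring
        have hf0 : ∀ᵐ x ∂(volume.restrict X), f x ^ 2 = 0 := by
          have := (integral_eq_zero_iff_of_nonneg (fun x => sq_nonneg (f x)) hfsqX).mp hfsq0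
          filter_upwards [this] with x hx using hx
        have habs0 : ∫ x in X, |f x| = 0 := by
          rw [integral_eq_zero_iff_of_nonneg (fun x => abs_nonneg (f x)) hfXint]
          filter_upwards [hf0] with x hx
          have : f x = 0 := by nlinarith [sq_nonneg (f x)]
          simp [this]
        rw [habs0]
        have : 0 ≤ ∫ x in X \ A, g x :=
          setIntegral_nonneg hXA fun x hx => hg0 x hx.1
        nlinarith
      · -- m > 0
        -- pointwise bounds
        have ptA : ∀ x ∈ A, |f x| ≤ (f x ^ 2 + m ^ 2) / (2 * m) := by
          intro x hx
          rw [le_div_iff₀ (by positivity)]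
          nlinarith [sq_nonneg (|f x| - m), sq_abs (f x)]
        have ptB : ∀ x ∈ X \ A, |f x| ≤ g x + (f x ^ 2 - g x ^ 2) / (2 * m) := by
          intro x hx
          have h1 := hfg x hx.1
          have h2 := hgB x hx
          have h3 := abs_nonneg (f x)
          rw [← sub_le_iff_le_add', le_div_iff₀ (by positivity)]
          nlinarith [sq_abs (f x)]
        -- integrability of the RHS functions
        have hRA : IntegrableOn (fun x => (f x ^ 2 + m ^ 2) / (2 * m)) A := by
          exact ((hfsqA.add (integrableOn_const hAfin.ne)).div_const _)
        have hsubInt : IntegrableOn (fun x => f x ^ 2 - g x ^ 2) (X \ A) :=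
          hfsqB.sub hgsqB
        have hdivInt : IntegrableOn (fun x => (f x ^ 2 - g x ^ 2) / (2 * m)) (X \ A) :=
          hsubInt.div_const _
        have hRB : IntegrableOn
            (fun x => g x + (f x ^ 2 - g x ^ 2) / (2 * m)) (X \ A) :=
          hgint.add hdivInt
        have intA : ∫ x in A, |f x| ≤ ∫ x in A, (f x ^ 2 + m ^ 2) / (2 * m) :=
          setIntegral_mono_on hfAint hRA hA ptA
        have intB : ∫ x in X \ A, |f x|
            ≤ ∫ x in X \ A, g x + (f x ^ 2 - g x ^ 2) / (2 * m) :=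
          setIntegral_mono_on hfBint hRB hXA ptB
        -- compute the RHS integrals
        have hcA : ∫ x in A, (f x ^ 2 + m ^ 2) / (2 * m)
            = ((∫ x in A, f x ^ 2) + V * m ^ 2) / (2 * m) := by
          rw [integral_div, integral_add hfsqA (integrableOn_const hAfin.ne),
            setIntegral_const, smul_eq_mul, measureReal_def]
        have hcB : ∫ x in X \ A, (g x + (f x ^ 2 - g x ^ 2) / (2 * m))
            = (∫ x in X \ A, g x)
              + ((∫ x in X \ A, f x ^ 2) - ∫ x in X \ A, g x ^ 2) / (2 * m) := by
          rw [integral_add hgint hdivInt, integral_div,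
            integral_sub hfsqB hgsqB]
        rw [hsplit_abs]
        rw [hcA] at intA
        rw [hcB] at intB
        have hw : V * m ^ 2 + (∫ x in X \ A, g x ^ 2)
            = (∫ x in A, f x ^ 2) + ∫ x in X \ A, f x ^ 2 := by
          rw [← hsplit_sq]; exact hwater
        have h2m : (0:ℝ) < 2 * m := by positivity
        have : ((∫ x in A, f x ^ 2) + V * m ^ 2) / (2 * m)
            + ((∫ x in X \ A, f x ^ 2) - ∫ x in X \ A, g x ^ 2) / (2 * m)
            = V * m := by
          field_simp
          nlinarith [hw]
        linarith
  -- convert to lintegral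
  have hpos : 0 ≤ᵐ[volume.restrict X] fun x => |f x| :=
    Filter.Eventually.of_forall fun x => abs_nonneg _
  calc ∫⁻ x in X, ENNReal.ofReal |f x|
      = ENNReal.ofReal (∫ x in X, |f x|) :=
        (ofReal_integral_eq_lintegral_ofReal hfXint hpos).symm
    _ ≤ ENNReal.ofReal (V * m + ∫ x in X \ A, g x) := ENNReal.ofReal_le_ofReal hkey
end

section
/- For every C₁ > 0, γ > 0, and d ∈ ℕ, there exists a constant C₂ > 0 (depending only on C₁, γ, d) such that for all probability densities f, g on ℝ^d satisfying the sub-Gaussian envelope bounds f(x) ≤ C₁ exp(−γ‖x‖₂²) and g(x) ≤ C₁ exp(−γ‖x‖₂²) for all x ∈ ℝ^d, and satisfying 0 < ‖f − g‖₂ ≤ 1/2, one has TV(f, g) ≤ C₂ · ‖f − g‖₂ · ( log( 1/‖f − g‖₂ ) )^{d/2}. -/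
open MeasureTheory

private lemma gauss_integrable (d : ℕ) {b : ℝ} (hb : 0 < b) :
    Integrable (fun x : EuclideanSpace ℝ (Fin d) => Real.exp (-b * ‖x‖ ^ 2)) := by
  have h := (GaussianFourier.integrable_cexp_neg_mul_sq_norm_add (b := (b : ℂ))
      (by simpa using hb) 0 (0 : EuclideanSpace ℝ (Fin d))).norm
  refine h.congr (Filter.Eventually.of_forall fun v => ?_)
  simp [Complex.norm_exp]
  exact Or.inl (by rw [← Complex.ofReal_pow, Complex.ofReal_re])

private lemma gauss_integral (d : ℕ) {b : ℝ} (hb : 0 < b) :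
    ∫ x : EuclideanSpace ℝ (Fin d), Real.exp (-b * ‖x‖ ^ 2)
      = (Real.pi / b) ^ ((d : ℝ) / 2) := by
  rw [GaussianFourier.integral_rexp_neg_mul_sq_norm hb]
  norm_num [finrank_euclideanSpace_fin]

set_option maxHeartbeats 2000000 in
/-- For densities with a common sub-Gaussian envelope, the TV distance is bounded by
`C₂ ‖f−g‖₂ (log(1/‖f−g‖₂))^{d/2}` for some constant `C₂ = C₂(C₁, γ, d)`. -/
theorem tv_le_of_subgaussian_envelope (C₁ γ : ℝ) (hC₁ : 0 < C₁) (hγ : 0 < γ) (d : ℕ) :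
    ∃ C₂ : ℝ, 0 < C₂ ∧
      ∀ f g : EuclideanSpace ℝ (Fin d) → ℝ,
        Measurable f → Measurable g →
        (∀ x, 0 ≤ f x) → (∀ x, 0 ≤ g x) →
        Integrable f → Integrable g →
        (∫ x, f x) = 1 → (∫ x, g x) = 1 →
        (∀ x, f x ≤ C₁ * Real.exp (-γ * ‖x‖ ^ 2)) →
        (∀ x, g x ≤ C₁ * Real.exp (-γ * ‖x‖ ^ 2)) →
        0 < Real.sqrt (∫ x, (f x - g x) ^ 2) →
        Real.sqrt (∫ x, (f x - g x) ^ 2) ≤ 1 / 2 →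
        (1 / 2) * ∫ x, |f x - g x|
          ≤ C₂ * Real.sqrt (∫ x, (f x - g x) ^ 2) *
              (Real.log (1 / Real.sqrt (∫ x, (f x - g x) ^ 2))) ^ ((d : ℝ) / 2) := by
  set A : ℝ := ((Real.log 2) ^ ((d : ℝ) / 2))⁻¹ with hA_def
  set M : ℝ := max 1 (2 * C₁) with hM_def
  set c₁ : ℝ := (Real.pi / γ) * (1 + 1 / Real.log 2) with hc₁_def
  clear_value A M c₁
  have hlog2 : (0 : ℝ) < Real.log 2 := Real.log_pos (by norm_num)
  have hπ := Real.pi_pos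
  have hc₁pos : 0 < c₁ := by rw [hc₁_def]; positivity
  have hApos : 0 < A := by rw [hA_def]; positivity
  have hMpos : 0 < M := by rw [hM_def]; exact lt_of_lt_of_le one_pos (le_max_left _ _)
  have hCpos : 0 < A + Real.exp 1 * M * c₁ ^ ((d : ℝ) / 2) := by
    have h := mul_nonneg (mul_nonneg (Real.exp_pos 1).le hMpos.le)
      (Real.rpow_nonneg hc₁pos.le ((d : ℝ) / 2))
    linarith
  refine ⟨A + Real.exp 1 * M * c₁ ^ ((d : ℝ) / 2), hCpos, ?_⟩
  intro f g hfm hgm hf0 hg0 hfi hgi hfint hgint hfe hge hεpos hεhalf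
  set ε : ℝ := Real.sqrt (∫ x, (f x - g x) ^ 2) with hε_def
  set L : ℝ := Real.log (1 / ε) with hL_def
  set θ : ℝ := 1 / (L + 1) with hθ_def
  clear_value ε L θ
  have hL2 : Real.log 2 ≤ L := by
    rw [hL_def]
    apply Real.log_le_log (by norm_num)
    rw [le_div_iff₀ hεpos]
    linarith
  have hL0 : 0 < L := lt_of_lt_of_le hlog2 hL2
  have hθ0 : 0 < θ := by rw [hθ_def]; exact div_pos one_pos (by linarith)
  have hθ1 : θ ≤ 1 := by
    rw [hθ_def, div_le_one (by linarith)]; linarith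
  -- integrability facts
  have hbdf : ∀ x, f x ≤ C₁ := fun x => le_trans (hfe x) (by
    nlinarith [Real.exp_le_one_iff.2 (by nlinarith [sq_nonneg ‖x‖] : -γ * ‖x‖ ^ 2 ≤ 0), hC₁.le])
  have hbdg : ∀ x, g x ≤ C₁ := fun x => le_trans (hge x) (by
    nlinarith [Real.exp_le_one_iff.2 (by nlinarith [sq_nonneg ‖x‖] : -γ * ‖x‖ ^ 2 ≤ 0), hC₁.le])
  have hf2 : Integrable (fun x => (f x) ^ 2) := by
    refine Integrable.mono' (hfi.const_mul C₁)
      ((hfm.pow_const 2).aestronglyMeasurable) (Filter.Eventually.of_forall fun x => ?_)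
    rw [Real.norm_eq_abs, abs_of_nonneg (sq_nonneg _)]
    nlinarith [hf0 x, hbdf x]
  have hg2 : Integrable (fun x => (g x) ^ 2) := by
    refine Integrable.mono' (hgi.const_mul C₁)
      ((hgm.pow_const 2).aestronglyMeasurable) (Filter.Eventually.of_forall fun x => ?_)
    rw [Real.norm_eq_abs, abs_of_nonneg (sq_nonneg _)]
    nlinarith [hg0 x, hbdg x]
  have hh2 : Integrable (fun x => (f x - g x) ^ 2) := by
    refine Integrable.mono' ((hf2.const_mul 2).add (hg2.const_mul 2))
      (((hfm.sub hgm).pow_const 2).aestronglyMeasurable)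
      (Filter.Eventually.of_forall fun x => ?_)
    simp only [Pi.add_apply]
    rw [Real.norm_eq_abs, abs_of_nonneg (sq_nonneg _)]
    nlinarith [sq_nonneg (f x + g x)]
  have hsq : ∫ x, (f x - g x) ^ 2 = ε ^ 2 := by
    rw [hε_def]
    exact (Real.sq_sqrt (integral_nonneg fun x => sq_nonneg _)).symm
  have hgauss : Integrable (fun x : EuclideanSpace ℝ (Fin d) =>
      Real.exp (-(θ * γ) * ‖x‖ ^ 2)) := gauss_integrable d (mul_pos hθ0 hγ)
  set K : ℝ := (ε / 4) ^ (1 - θ) * (2 * C₁) ^ θ with hK_def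
  clear_value K
  -- pointwise bound
  have key : ∀ x, |f x - g x|
      ≤ (1 / ε) * (f x - g x) ^ 2 + K * Real.exp (-(θ * γ) * ‖x‖ ^ 2) := by
    intro x
    set E : ℝ := C₁ * Real.exp (-γ * ‖x‖ ^ 2) with hE_def
    have hEpos : 0 < E := by positivity
    set m : ℝ := min (ε / 4) (2 * E) with hm_def
    have hm0 : 0 < m := lt_min (by positivity) (by positivity)
    have step1 : |f x - g x| ≤ (1 / ε) * (f x - g x) ^ 2 + m := by
      rcases le_total (ε / 4) (2 * E) with h | h
      · rw [hm_def, min_eq_left h]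
        have key0 : ε * |f x - g x| ≤ (f x - g x) ^ 2 + ε ^ 2 / 4 := by
          nlinarith [sq_nonneg (|f x - g x| - ε / 2), sq_abs (f x - g x)]
        calc |f x - g x| = ε * |f x - g x| / ε := by field_simp
          _ ≤ ((f x - g x) ^ 2 + ε ^ 2 / 4) / ε := by gcongr
          _ = (1 / ε) * (f x - g x) ^ 2 + ε / 4 := by field_simp
      · rw [hm_def, min_eq_right h]
        have hb : |f x - g x| ≤ 2 * E := by
          calc |f x - g x| ≤ |f x| + |g x| := abs_sub (f x) (g x)
            _ = f x + g x := by
                rw [abs_of_nonneg (hf0 x), abs_of_nonneg (hg0 x)]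
            _ ≤ 2 * E := by have := hfe x; have := hge x; rw [hE_def]; linarith
        have : 0 ≤ (1 / ε) * (f x - g x) ^ 2 := by positivity
        linarith
    have step2 : m ≤ (ε / 4) ^ (1 - θ) * (2 * E) ^ θ := by
      calc m = m ^ (1 - θ) * m ^ θ := by
            rw [← Real.rpow_add hm0]; norm_num
        _ ≤ (ε / 4) ^ (1 - θ) * (2 * E) ^ θ := by
            apply mul_le_mul
            · exact Real.rpow_le_rpow hm0.le (min_le_left _ _) (by linarith)
            · exact Real.rpow_le_rpow hm0.le (min_le_right _ _) hθ0.le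
            · positivity
            · positivity
    have step3 : (2 * E) ^ θ = (2 * C₁) ^ θ * Real.exp (-(θ * γ) * ‖x‖ ^ 2) := by
      rw [hE_def, ← mul_assoc, Real.mul_rpow (by positivity) (Real.exp_pos _).le,
        ← Real.exp_mul]
      ring_nf
    calc |f x - g x| ≤ (1 / ε) * (f x - g x) ^ 2 + m := step1
      _ ≤ (1 / ε) * (f x - g x) ^ 2 + (ε / 4) ^ (1 - θ) * (2 * E) ^ θ := by linarith
      _ = (1 / ε) * (f x - g x) ^ 2 + K * Real.exp (-(θ * γ) * ‖x‖ ^ 2) := by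
          rw [step3, hK_def]; ring
  -- integrate the pointwise bound
  have habs : Integrable (fun x => |f x - g x|) := (hfi.sub hgi).abs
  have hRHS : Integrable (fun x => (1 / ε) * (f x - g x) ^ 2
      + K * Real.exp (-(θ * γ) * ‖x‖ ^ 2)) :=
    (hh2.const_mul _).add (hgauss.const_mul _)
  have hint : ∫ x, |f x - g x|
      ≤ ε + K * (Real.pi / (θ * γ)) ^ ((d : ℝ) / 2) := by
    calc ∫ x, |f x - g x|
        ≤ ∫ x, ((1 / ε) * (f x - g x) ^ 2 + K * Real.exp (-(θ * γ) * ‖x‖ ^ 2)) :=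
          integral_mono habs hRHS key
      _ = (1 / ε) * (∫ x, (f x - g x) ^ 2)
          + K * (∫ x : EuclideanSpace ℝ (Fin d), Real.exp (-(θ * γ) * ‖x‖ ^ 2)) := by
          rw [integral_add (hh2.const_mul _) (hgauss.const_mul _),
            integral_const_mul, integral_const_mul]
      _ = ε + K * (Real.pi / (θ * γ)) ^ ((d : ℝ) / 2) := by
          rw [hsq, gauss_integral d (mul_pos hθ0 hγ)]
          field_simp
  -- arithmetic: bound `K`
  have hεθ : ε ^ (-θ) ≤ Real.exp 1 := by
    have hlogε : Real.log ε = -L := by rw [hL_def, one_div, Real.log_inv, neg_neg]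
    rw [Real.rpow_def_of_pos hεpos, hlogε]
    apply Real.exp_le_exp.2
    rw [neg_mul_neg, hθ_def, mul_one_div, div_le_one (by linarith)]
    linarith
  have hK1 : (ε / 4 : ℝ) ^ (1 - θ) ≤ ε * Real.exp 1 := by
    have h4 : (1 : ℝ) ≤ (4 : ℝ) ^ (1 - θ) :=
      Real.one_le_rpow (by norm_num) (by linarith)
    have hd : (ε / 4 : ℝ) ^ (1 - θ) = ε ^ (1 - θ) / (4 : ℝ) ^ (1 - θ) :=
      Real.div_rpow hεpos.le (by norm_num : (0:ℝ) ≤ 4) _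
    have h5 : ε ^ (1 - θ) = ε * ε ^ (-θ) := by
      rw [show (1 : ℝ) - θ = 1 + -θ by ring, Real.rpow_add hεpos, Real.rpow_one]
    have h6 : ε ^ (1 - θ) ≤ ε * Real.exp 1 := by
      rw [h5]
      exact mul_le_mul_of_nonneg_left hεθ hεpos.le
    calc (ε / 4 : ℝ) ^ (1 - θ) = ε ^ (1 - θ) / (4 : ℝ) ^ (1 - θ) := hd
      _ ≤ ε ^ (1 - θ) / 1 := by
          apply div_le_div_of_nonneg_left _ _ h4 <;> positivity
      _ = ε ^ (1 - θ) := by ring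
      _ ≤ ε * Real.exp 1 := h6
  have hK2 : (2 * C₁ : ℝ) ^ θ ≤ M := by
    rcases le_total (2 * C₁) 1 with h | h
    · calc (2 * C₁ : ℝ) ^ θ ≤ 1 := Real.rpow_le_one (by positivity) h hθ0.le
        _ ≤ M := by rw [hM_def]; exact le_max_left _ _
    · calc (2 * C₁ : ℝ) ^ θ ≤ (2 * C₁ : ℝ) ^ (1 : ℝ) :=
          Real.rpow_le_rpow_of_exponent_le h hθ1
        _ = 2 * C₁ := Real.rpow_one _
        _ ≤ M := by rw [hM_def]; exact le_max_right _ _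
  have hKb : K ≤ ε * Real.exp 1 * M := by
    rw [hK_def]
    calc (ε / 4) ^ (1 - θ) * (2 * C₁) ^ θ
        ≤ (ε * Real.exp 1) * M := by
          exact mul_le_mul hK1 hK2 (Real.rpow_nonneg (by positivity) _)
            (mul_nonneg hεpos.le (Real.exp_pos 1).le)
      _ = ε * Real.exp 1 * M := by ring
  -- arithmetic: bound the Gaussian factor
  have hGb : (Real.pi / (θ * γ)) ^ ((d : ℝ) / 2)
      ≤ c₁ ^ ((d : ℝ) / 2) * L ^ ((d : ℝ) / 2) := by
    have h1 : Real.pi / (θ * γ) = (Real.pi / γ) * (L + 1) := by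
      rw [hθ_def]; field_simp
    have h2 : L + 1 ≤ (1 + 1 / Real.log 2) * L := by
      have : (1 : ℝ) ≤ L / Real.log 2 := (one_le_div hlog2).2 hL2
      have : (1 : ℝ) ≤ (1 / Real.log 2) * L := by
        rw [one_div, inv_mul_eq_div]; exact this
      nlinarith
    have h3 : Real.pi / (θ * γ) ≤ c₁ * L := by
      rw [h1, hc₁_def, mul_assoc]
      exact mul_le_mul_of_nonneg_left h2 (by positivity)
    calc (Real.pi / (θ * γ)) ^ ((d : ℝ) / 2) ≤ (c₁ * L) ^ ((d : ℝ) / 2) :=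
        Real.rpow_le_rpow (by positivity) h3 (by positivity)
      _ = c₁ ^ ((d : ℝ) / 2) * L ^ ((d : ℝ) / 2) :=
        Real.mul_rpow hc₁pos.le hL0.le
  -- arithmetic: absorb the `ε` term
  have hεb : ε ≤ A * (ε * L ^ ((d : ℝ) / 2)) := by
    have h1 : (Real.log 2) ^ ((d : ℝ) / 2) ≤ L ^ ((d : ℝ) / 2) :=
      Real.rpow_le_rpow hlog2.le hL2 (by positivity)
    have h2 : (1 : ℝ) ≤ A * L ^ ((d : ℝ) / 2) := by
      rw [hA_def]
      calc (1 : ℝ) = ((Real.log 2) ^ ((d : ℝ) / 2))⁻¹ * (Real.log 2) ^ ((d : ℝ) / 2) := by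
            rw [inv_mul_cancel₀ (by positivity)]
        _ ≤ ((Real.log 2) ^ ((d : ℝ) / 2))⁻¹ * L ^ ((d : ℝ) / 2) :=
            mul_le_mul_of_nonneg_left h1 (by positivity)
    calc ε = ε * 1 := by ring
      _ ≤ ε * (A * L ^ ((d : ℝ) / 2)) := mul_le_mul_of_nonneg_left h2 hεpos.le
      _ = A * (ε * L ^ ((d : ℝ) / 2)) := by ring
  -- put everything together
  have hfinal : ∫ x, |f x - g x|
      ≤ (A + Real.exp 1 * M * c₁ ^ ((d : ℝ) / 2)) * ε * L ^ ((d : ℝ) / 2) := by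
    have hG0 : (0 : ℝ) ≤ (Real.pi / (θ * γ)) ^ ((d : ℝ) / 2) := by positivity
    have hK0 : (0 : ℝ) ≤ K := by rw [hK_def]; positivity
    have h2 : K * (Real.pi / (θ * γ)) ^ ((d : ℝ) / 2)
        ≤ (ε * Real.exp 1 * M) * (c₁ ^ ((d : ℝ) / 2) * L ^ ((d : ℝ) / 2)) :=
      mul_le_mul hKb hGb hG0 (by positivity)
    calc ∫ x, |f x - g x| ≤ ε + K * (Real.pi / (θ * γ)) ^ ((d : ℝ) / 2) := hint
      _ ≤ A * (ε * L ^ ((d : ℝ) / 2))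
          + (ε * Real.exp 1 * M) * (c₁ ^ ((d : ℝ) / 2) * L ^ ((d : ℝ) / 2)) := by
          linarith
      _ = (A + Real.exp 1 * M * c₁ ^ ((d : ℝ) / 2)) * ε * L ^ ((d : ℝ) / 2) := by ring
  have habs0 : 0 ≤ ∫ x, |f x - g x| := integral_nonneg fun x => abs_nonneg _
  have hC2pos : (0 : ℝ) ≤ (A + Real.exp 1 * M * c₁ ^ ((d : ℝ) / 2)) * ε * L ^ ((d : ℝ) / 2) :=
    mul_nonneg (mul_nonneg hCpos.le hεpos.le) (Real.rpow_nonneg hL0.le _)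
  linarith
end

section
/- (Minimax impossibility of learning one-dimensional Gaussians from Gaussian-smoothed samples.) Fix σ₀ > 0 and n, B ∈ ℕ. For any family of 2^B measurable estimators A_b : ℝⁿ → ℝ × (0, ∞), b ∈ {0,1}^B (each mapping n observations to a pair (μ̂, σ̂)), the following minimax lower bound holds: sup over μ* ∈ ℝ and σ* > 0 of ℙ_{X₁,…,Xₙ i.i.d. ~ N(μ*, (σ*)² + σ₀²)} [ min_{b ∈ {0,1}^B} TV( N(μ*, (σ*)²), N(A_b(X₁,…,Xₙ)) ) ≥ 1/200 ] ≥ 1/2. (Observing n i.i.d. samples from N(μ*, (σ*)²) corrupted by additive independent N(0, σ₀²) noise is the same as observing n i.i.d. samples from N(μ*, (σ*)² + σ₀²).) -/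
open MeasureTheory ProbabilityTheory Real Set
open scoped NNReal ENNReal

/-- Total variation distance between two measures on `ℝ`:
`sup` over measurable sets of the absolute difference of their masses. -/
noncomputable def tvDist (P Q : Measure ℝ) : ℝ :=
  ⨆ s : {s : Set ℝ // MeasurableSet s}, |(P s.1).toReal - (Q s.1).toReal|

lemma toReal_prob_le_one {α : Type*} [MeasurableSpace α] {P : Measure α}
    [IsProbabilityMeasure P] (s : Set α) : (P s).toReal ≤ 1 := by
  have h := prob_le_one (μ := P) (s := s)
  simpa using ENNReal.toReal_mono (by simp) h

lemma abs_sub_le_tvDist (P Q : Measure ℝ) [IsProbabilityMeasure P] [IsProbabilityMeasure Q]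
    {s : Set ℝ} (hs : MeasurableSet s) :
    |(P s).toReal - (Q s).toReal| ≤ tvDist P Q := by
  have hb : BddAbove (Set.range fun t : {s : Set ℝ // MeasurableSet s} =>
      |(P t.1).toReal - (Q t.1).toReal|) := by
    refine ⟨2, ?_⟩
    rintro y ⟨t, rfl⟩
    have h1 := toReal_prob_le_one (P := P) t.1
    have h2 := toReal_prob_le_one (P := Q) t.1
    have h3 : (0:ℝ) ≤ (P t.1).toReal := ENNReal.toReal_nonneg
    have h4 : (0:ℝ) ≤ (Q t.1).toReal := ENNReal.toReal_nonneg
    rw [abs_le]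
    constructor <;> linarith
  exact le_ciSup hb ⟨s, hs⟩

lemma toNNReal_sq_coe (σ : ℝ) : (((σ^2).toNNReal : ℝ≥0) : ℝ) = σ^2 :=
  Real.coe_toNNReal _ (sq_nonneg σ)

lemma sq_toNNReal_ne_zero {σ : ℝ} (hσ : 0 < σ) : (σ^2).toNNReal ≠ 0 := by
  rw [Ne, Real.toNNReal_eq_zero, not_le]
  positivity

lemma sqrt_two_pi_sq {σ : ℝ} (hσ : 0 < σ) :
    Real.sqrt (2 * π * (((σ^2).toNNReal : ℝ≥0) : ℝ)) = σ * Real.sqrt (2*π) := by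
  rw [toNNReal_sq_coe, mul_comm (2*π), Real.sqrt_mul (sq_nonneg σ), Real.sqrt_sq hσ.le]

lemma gaussianPDFReal_le {σ : ℝ} (hσ : 0 < σ) (μ x : ℝ) :
    gaussianPDFReal μ ((σ^2).toNNReal) x ≤ (σ * Real.sqrt (2 * π))⁻¹ := by
  rw [gaussianPDFReal, sqrt_two_pi_sq hσ]
  have h1 : Real.exp (-(x - μ)^2 / (2 * (((σ^2).toNNReal : ℝ≥0) : ℝ))) ≤ 1 := by
    rw [Real.exp_le_one_iff]
    rw [toNNReal_sq_coe]
    have : (0:ℝ) < 2 * σ^2 := by positivity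
    exact div_nonpos_of_nonpos_of_nonneg (neg_nonpos.mpr (by positivity)) this.le
  have h2 : (0:ℝ) ≤ (σ * Real.sqrt (2*π))⁻¹ := by positivity
  calc (σ * Real.sqrt (2*π))⁻¹ * Real.exp (-(x - μ)^2 / (2 * (((σ^2).toNNReal : ℝ≥0) : ℝ)))
      ≤ (σ * Real.sqrt (2*π))⁻¹ * 1 := by
        exact mul_le_mul_of_nonneg_left h1 h2
    _ = (σ * Real.sqrt (2*π))⁻¹ := mul_one _

lemma gaussianPDFReal_ge {σ : ℝ} (hσ : 0 < σ) {x : ℝ} (hx : x ∈ Ioo (-(2*σ)) (2*σ)) :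
    Real.exp (-2) * (σ * Real.sqrt (2 * π))⁻¹ ≤ gaussianPDFReal 0 ((σ^2).toNNReal) x := by
  rw [gaussianPDFReal, sqrt_two_pi_sq hσ, toNNReal_sq_coe]
  obtain ⟨hx1, hx2⟩ := hx
  have h1 : Real.exp (-2) ≤ Real.exp (-(x - 0)^2 / (2 * σ^2)) := by
    apply Real.exp_le_exp.2
    rw [le_div_iff₀ (by positivity : (0:ℝ) < 2 * σ^2)]
    nlinarith
  have h2 : (0:ℝ) ≤ (σ * Real.sqrt (2*π))⁻¹ := by positivity
  calc Real.exp (-2) * (σ * Real.sqrt (2*π))⁻¹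
      ≤ Real.exp (-(x - 0)^2 / (2 * σ^2)) * (σ * Real.sqrt (2*π))⁻¹ :=
        mul_le_mul_of_nonneg_right h1 h2
    _ = (σ * Real.sqrt (2*π))⁻¹ * Real.exp (-(x - 0)^2 / (2 * σ^2)) := mul_comm _ _

lemma gauss_Ioo_le {σ a : ℝ} (hσ : 0 < σ) (ha : 0 ≤ a) (μ : ℝ) :
    gaussianReal μ ((σ^2).toNNReal) (Ioo (-a) a) ≤
      ENNReal.ofReal (2 * a * (σ * Real.sqrt (2*π))⁻¹) := by
  rw [gaussianReal_apply _ (sq_toNNReal_ne_zero hσ)]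
  calc ∫⁻ x in Ioo (-a) a, gaussianPDF μ ((σ^2).toNNReal) x
      ≤ ∫⁻ _x in Ioo (-a) a, ENNReal.ofReal ((σ * Real.sqrt (2*π))⁻¹) :=
        setLIntegral_mono measurable_const
          (fun x _ => ENNReal.ofReal_le_ofReal (gaussianPDFReal_le hσ μ x))
    _ = ENNReal.ofReal ((σ * Real.sqrt (2*π))⁻¹) * volume (Ioo (-a) a) :=
        setLIntegral_const _ _
    _ = ENNReal.ofReal ((σ * Real.sqrt (2*π))⁻¹) * ENNReal.ofReal (2*a) := by
        rw [Real.volume_Ioo]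
        ring_nf
    _ = ENNReal.ofReal (2 * a * (σ * Real.sqrt (2*π))⁻¹) := by
        rw [← ENNReal.ofReal_mul (by positivity)]
        ring_nf

lemma gauss_Ioo_ge {σ : ℝ} (hσ : 0 < σ) :
    ENNReal.ofReal (Real.exp (-2) * (σ * Real.sqrt (2*π))⁻¹ * (4 * σ)) ≤
      gaussianReal 0 ((σ^2).toNNReal) (Ioo (-(2*σ)) (2*σ)) := by
  rw [gaussianReal_apply _ (sq_toNNReal_ne_zero hσ)]
  calc ENNReal.ofReal (Real.exp (-2) * (σ * Real.sqrt (2*π))⁻¹ * (4 * σ))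
      = ENNReal.ofReal (Real.exp (-2) * (σ * Real.sqrt (2*π))⁻¹) * volume (Ioo (-(2*σ)) (2*σ)) := by
        rw [Real.volume_Ioo, ← ENNReal.ofReal_mul (by positivity)]
        norm_num
        ring_nf
    _ = ∫⁻ _x in Ioo (-(2*σ)) (2*σ), ENNReal.ofReal (Real.exp (-2) * (σ * Real.sqrt (2*π))⁻¹) :=
        (setLIntegral_const _ _).symm
    _ ≤ ∫⁻ x in Ioo (-(2*σ)) (2*σ), gaussianPDF 0 ((σ^2).toNNReal) x :=
        setLIntegral_mono (measurable_gaussianPDF _ _)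
          (fun x hx => ENNReal.ofReal_le_ofReal (gaussianPDFReal_ge hσ hx))

-- numeric facts
lemma sqrt_two_pi_lb : (2.5:ℝ) ≤ Real.sqrt (2*π) := by
  rw [Real.le_sqrt (by norm_num) (by positivity)]
  nlinarith [Real.pi_gt_d6]

lemma sqrt_two_pi_ub : Real.sqrt (2*π) ≤ 2.51 := by
  rw [Real.sqrt_le_iff]
  constructor
  · norm_num
  · nlinarith [Real.pi_lt_d2]

lemma exp_neg_two_lb : (1:ℝ)/7.4 ≤ Real.exp (-2) := by
  have h2 : Real.exp 2 < 7.4 := by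
    have h1 := Real.exp_one_lt_d9
    have : Real.exp 2 = Real.exp 1 * Real.exp 1 := by
      rw [← Real.exp_add]; norm_num
    nlinarith [Real.exp_pos 1]
  have h3 : Real.exp (-2) = (Real.exp 2)⁻¹ := by
    rw [← Real.exp_neg]
  rw [h3, one_div]
  exact (inv_strictAnti₀ (Real.exp_pos 2) h2).le

lemma gauss_gap {σi σj : ℝ} (hj : 0 < σj) (hij : 100 * σj ≤ σi) :
    (gaussianReal 0 ((σi^2).toNNReal) (Ioo (-(2*σj)) (2*σj))).toReal + 1/100 <
      (gaussianReal 0 ((σj^2).toNNReal) (Ioo (-(2*σj)) (2*σj))).toReal := by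
  have hi : 0 < σi := lt_of_lt_of_le (by positivity) hij
  have hs1 := sqrt_two_pi_lb
  have hs2 := sqrt_two_pi_ub
  have he := exp_neg_two_lb
  have hspos : (0:ℝ) < Real.sqrt (2*π) := by positivity
  -- upper bound
  have hU : (gaussianReal 0 ((σi^2).toNNReal) (Ioo (-(2*σj)) (2*σj))).toReal
      ≤ 2 * (2*σj) * (σi * Real.sqrt (2*π))⁻¹ := by
    have h1 := gauss_Ioo_le hi (by positivity : (0:ℝ) ≤ 2*σj) 0
    have h2 := ENNReal.toReal_mono ENNReal.ofReal_ne_top h1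
    rw [ENNReal.toReal_ofReal (by positivity)] at h2
    exact h2
  have hU2 : 2 * (2*σj) * (σi * Real.sqrt (2*π))⁻¹ ≤ 0.016 := by
    rw [mul_inv, ← mul_assoc]
    have h3 : 2 * (2*σj) * σi⁻¹ ≤ 4 / 100 := by
      have h4 : σj ≤ σi / 100 := by linarith
      have h5 : 2 * (2*σj) ≤ 4 * (σi/100) := by linarith
      calc 2 * (2*σj) * σi⁻¹ ≤ 4 * (σi/100) * σi⁻¹ :=
            mul_le_mul_of_nonneg_right h5 (by positivity)
        _ = 4/100 * (σi * σi⁻¹) := by ring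
        _ = 4/100 := by rw [mul_inv_cancel₀ hi.ne']; ring
    calc 2 * (2*σj) * σi⁻¹ * (Real.sqrt (2*π))⁻¹
        ≤ 4/100 * (Real.sqrt (2*π))⁻¹ := by
          apply mul_le_mul_of_nonneg_right h3 (by positivity)
      _ ≤ 4/100 * (2.5)⁻¹ := by
          apply mul_le_mul_of_nonneg_left _ (by norm_num)
          exact inv_anti₀ (by norm_num) hs1
      _ = 0.016 := by norm_num
  -- lower bound
  have hL : (0.21:ℝ) ≤ (gaussianReal 0 ((σj^2).toNNReal) (Ioo (-(2*σj)) (2*σj))).toReal := by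
    have h1 := gauss_Ioo_ge hj
    have h2 := ENNReal.toReal_mono (measure_ne_top _ _) h1
    rw [ENNReal.toReal_ofReal (by positivity)] at h2
    refine le_trans ?_ h2
    have hkey : Real.exp (-2) * (σj * Real.sqrt (2*π))⁻¹ * (4 * σj)
        = 4 * Real.exp (-2) / Real.sqrt (2*π) := by
      field_simp
    rw [hkey]
    rw [le_div_iff₀ hspos]
    nlinarith [Real.exp_pos (-2)]
  linarith

lemma gauss_le_smul {σz τ : ℝ} (h0 : 0 < σz) (hτ : σz ≤ τ) (μ : ℝ) :
    gaussianReal μ ((σz^2).toNNReal) ≤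
      ENNReal.ofReal (τ/σz) • gaussianReal μ ((τ^2).toNNReal) := by
  have hτ0 : 0 < τ := lt_of_lt_of_le h0 hτ
  rw [gaussianReal_of_var_ne_zero _ (sq_toNNReal_ne_zero h0),
      gaussianReal_of_var_ne_zero _ (sq_toNNReal_ne_zero hτ0),
      ← withDensity_smul' _ _ ENNReal.ofReal_ne_top]
  refine withDensity_mono (Filter.Eventually.of_forall fun x => ?_)
  show gaussianPDF μ ((σz^2).toNNReal) x
      ≤ ENNReal.ofReal (τ/σz) • gaussianPDF μ ((τ^2).toNNReal) x
  rw [gaussianPDF, gaussianPDF, smul_eq_mul,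
      ← ENNReal.ofReal_mul (by positivity)]
  apply ENNReal.ofReal_le_ofReal
  rw [gaussianPDFReal, gaussianPDFReal, sqrt_two_pi_sq h0, sqrt_two_pi_sq hτ0,
      toNNReal_sq_coe, toNNReal_sq_coe]
  have hrw : τ/σz * ((τ * Real.sqrt (2*π))⁻¹ * Real.exp (-(x - μ)^2 / (2 * τ^2)))
      = (σz * Real.sqrt (2*π))⁻¹ * Real.exp (-(x - μ)^2 / (2 * τ^2)) := by
    have h9 : Real.sqrt (2*π) ≠ 0 := by positivity
    field_simp
  rw [hrw]
  apply mul_le_mul_of_nonneg_left _ (by positivity)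
  apply Real.exp_le_exp.2
  rw [neg_div, neg_div, neg_le_neg_iff]
  apply div_le_div_of_nonneg_left (by positivity) (by positivity)
  nlinarith

lemma my_prod_mono {α β : Type*} [MeasurableSpace α] [MeasurableSpace β]
    {μ₁ μ₂ : Measure α} {ν₁ ν₂ : Measure β} [SFinite ν₁] [SFinite ν₂]
    (hμ : μ₁ ≤ μ₂) (hν : ν₁ ≤ ν₂) : μ₁.prod ν₁ ≤ μ₂.prod ν₂ := by
  rw [Measure.le_iff]
  intro s hs
  rw [Measure.prod_apply hs, Measure.prod_apply hs]
  calc ∫⁻ x, ν₁ (Prod.mk x ⁻¹' s) ∂μ₁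
      ≤ ∫⁻ x, ν₂ (Prod.mk x ⁻¹' s) ∂μ₁ :=
        lintegral_mono fun x => Measure.le_iff'.1 hν _
    _ ≤ ∫⁻ x, ν₂ (Prod.mk x ⁻¹' s) ∂μ₂ := lintegral_mono' hμ le_rfl

lemma my_smul_prod {α β : Type*} [MeasurableSpace α] [MeasurableSpace β]
    (c : ℝ≥0∞) (μ : Measure α) (ν : Measure β) [SFinite ν] :
    (c • μ).prod ν = c • (μ.prod ν) := by
  ext s hs
  rw [Measure.smul_apply, Measure.prod_apply hs, Measure.prod_apply hs,
    lintegral_smul_measure, smul_eq_mul]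

lemma my_prod_smul {α β : Type*} [MeasurableSpace α] [MeasurableSpace β]
    (c : ℝ≥0∞) (hc : c ≠ ⊤) (μ : Measure α) (ν : Measure β) [SFinite ν] :
    μ.prod (c • ν) = c • (μ.prod ν) := by
  ext s hs
  rw [Measure.smul_apply, Measure.prod_apply hs, Measure.prod_apply hs, smul_eq_mul,
    ← lintegral_const_mul' _ _ hc]
  simp only [Measure.smul_apply, smul_eq_mul]

lemma my_pi_le_smul_pi (n : ℕ) {P Q : Measure ℝ}
    [IsProbabilityMeasure P] [IsProbabilityMeasure Q]
    (c : ℝ≥0∞) (hc : c ≠ ⊤) (h : Q ≤ c • P) :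
    Measure.pi (fun _ : Fin n => Q) ≤ c^n • Measure.pi (fun _ : Fin n => P) := by
  induction n with
  | zero =>
      rw [Measure.le_iff]
      intro s _hs
      rcases s.eq_empty_or_nonempty with rfl | hne
      · simp
      · have hsu : s = univ := by
          apply Set.eq_univ_of_forall
          intro x
          obtain ⟨y, hy⟩ := hne
          rwa [Subsingleton.elim x y]
        subst hsu
        simp [measure_univ]
  | succ n ih =>
      have hQ := measurePreserving_piFinSuccAbove (fun _ : Fin (n+1) => Q) 0
      have hP := measurePreserving_piFinSuccAbove (fun _ : Fin (n+1) => P) 0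
      set e := MeasurableEquiv.piFinSuccAbove (fun _ : Fin (n+1) => ℝ) 0 with he
      have hQ' : Measure.pi (fun _ : Fin (n+1) => Q)
          = Measure.map e.symm (Q.prod (Measure.pi fun _ : Fin n => Q)) :=
        (MeasurePreserving.symm e hQ).map_eq.symm
      have hP' : Measure.map e.symm (P.prod (Measure.pi fun _ : Fin n => P))
          = Measure.pi (fun _ : Fin (n+1) => P) :=
        (MeasurePreserving.symm e hP).map_eq
      calc Measure.pi (fun _ : Fin (n+1) => Q)
          = Measure.map e.symm (Q.prod (Measure.pi fun _ : Fin n => Q)) := hQ'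
        _ ≤ Measure.map e.symm ((c • P).prod (c^n • Measure.pi fun _ : Fin n => P)) :=
            Measure.map_mono (my_prod_mono h ih) e.symm.measurable
        _ = c^(n+1) • Measure.map e.symm (P.prod (Measure.pi fun _ : Fin n => P)) := by
            rw [my_smul_prod, my_prod_smul _ (ENNReal.pow_ne_top hc), smul_smul, ← pow_succ',
              Measure.map_smul]
        _ = c^(n+1) • Measure.pi (fun _ : Fin (n+1) => P) := by rw [hP']

lemma measurable_gaussObs {s : Set ℝ} (_hs : MeasurableSet s) :
    Measurable (fun p : ℝ × ℝ =>
      ∫⁻ y in s, ENNReal.ofReal (gaussianPDFReal p.1 ((p.2^2).toNNReal) y)) := by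
  apply Measurable.lintegral_prod_right'
    (f := fun q : (ℝ × ℝ) × ℝ => ENNReal.ofReal (gaussianPDFReal q.1.1 ((q.1.2^2).toNNReal) q.2))
  have hre : ∀ q : (ℝ × ℝ) × ℝ, gaussianPDFReal q.1.1 ((q.1.2^2).toNNReal) q.2
      = (Real.sqrt (2 * π * (q.1.2^2)))⁻¹ * Real.exp (-(q.2 - q.1.1)^2 / (2 * (q.1.2^2))) := by
    intro q
    rw [gaussianPDFReal, toNNReal_sq_coe]
  simp only [hre]
  apply Measurable.ennreal_ofReal
  apply Measurable.mul
  · apply Measurable.inv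
    apply Measurable.sqrt  -- ??
    fun_prop
  · apply Real.measurable_exp.comp
    apply Measurable.div <;> fun_prop

lemma one_add_pow_le {x : ℝ} (hx0 : 0 ≤ x) (hx1 : x ≤ 1) (n : ℕ) :
    (1 + x)^n ≤ 1 + (2^n - 1) * x := by
  induction n with
  | zero => simp
  | succ n ih =>
      have h1 : (0:ℝ) ≤ 1 + x := by linarith
      have h2 : (1:ℝ) ≤ 2^n := one_le_pow₀ (by norm_num)
      calc (1 + x)^(n+1) = (1 + x)^n * (1 + x) := by ring
        _ ≤ (1 + (2^n - 1) * x) * (1 + x) := by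
            apply mul_le_mul_of_nonneg_right ih h1
        _ = 1 + (2^(n+1) - 1) * x + ((2^n - 1) * x^2 - (2^n-1) * x) := by ring
        _ ≤ 1 + (2^(n+1) - 1) * x := by
            nlinarith [mul_nonneg (by linarith : (0:ℝ) ≤ 2^n - 1) (by nlinarith : (0:ℝ) ≤ x - x^2)]

set_option maxHeartbeats 1000000 in
/-- Minimax impossibility of learning one-dimensional Gaussians from Gaussian-smoothed
samples: for any family of `2^B` estimators `A_b : ℝⁿ → ℝ × (0,∞)`, the worst case (over
`μ*, σ*`) probability that every estimate is at TV distance at least `1/200` from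
`N(μ*, (σ*)²)` is at least `1/2`, where the `n` observations are i.i.d. from
`N(μ*, (σ*)² + σ₀²)`. -/
theorem minimax_gaussian_from_smoothed_samples
    (σ₀ : ℝ) (hσ₀ : 0 < σ₀) (n B : ℕ)
    (A : (Fin B → Bool) → (Fin n → ℝ) → ℝ × ℝ)
    (hAmeas : ∀ b, Measurable (A b))
    (hApos : ∀ b x, 0 < (A b x).2) :
    (1 / 2 : ℝ) ≤
      ⨆ (μstar : ℝ) (σstar : ℝ) (_ : 0 < σstar),
        ((Measure.pi fun _ : Fin n =>
            gaussianReal μstar ((σstar ^ 2 + σ₀ ^ 2).toNNReal))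
          {x : Fin n → ℝ |
            1 / 200 ≤ ⨅ b : Fin B → Bool,
              tvDist (gaussianReal μstar ((σstar ^ 2).toNNReal))
                (gaussianReal (A b x).1 (((A b x).2 ^ 2).toNNReal))}).toReal := by
  classical
  have hgle : ∀ (μstar σstar : ℝ),
      ((Measure.pi fun _ : Fin n =>
          gaussianReal μstar ((σstar ^ 2 + σ₀ ^ 2).toNNReal))
        {x : Fin n → ℝ |
          1 / 200 ≤ ⨅ b : Fin B → Bool,
            tvDist (gaussianReal μstar ((σstar ^ 2).toNNReal))
              (gaussianReal (A b x).1 (((A b x).2 ^ 2).toNNReal))}).toReal ≤ 1 :=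
    fun _ _ => toReal_prob_le_one _
  refine le_of_forall_pos_le_add fun ε hε => ?_
  set r : ℝ := 1 + 2*ε with hrdef
  have hr1 : (1:ℝ) < r := by rw [hrdef]; linarith
  have hr0 : (0:ℝ) < r := by linarith
  suffices hS : 1/(2*r) ≤
      ⨆ (μstar : ℝ) (σstar : ℝ) (_ : 0 < σstar),
        ((Measure.pi fun _ : Fin n =>
            gaussianReal μstar ((σstar ^ 2 + σ₀ ^ 2).toNNReal))
          {x : Fin n → ℝ |
            1 / 200 ≤ ⨅ b : Fin B → Bool,
              tvDist (gaussianReal μstar ((σstar ^ 2).toNNReal))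
                (gaussianReal (A b x).1 (((A b x).2 ^ 2).toNNReal))}).toReal by
    have h2 : 1/2 - 1/(2*r) ≤ ε := by
      have h3 : 1/2 - 1/(2*r) = ε/r := by field_simp; ring
      rw [h3]
      exact div_le_self hε.le hr1.le
    linarith
  -- choice of the scale parameter d
  set d : ℝ := min 1 ((r^2-1)/2^n) with hddef
  have hd0 : 0 < d := by
    apply lt_min one_pos
    apply div_pos (by nlinarith) (by positivity)
  have hd1 : d ≤ 1 := min_le_left _ _
  have hdr : 2^n * d ≤ r^2 - 1 := by
    have h1 := min_le_right 1 ((r^2-1)/2^n)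
    calc (2:ℝ)^n * d ≤ 2^n * ((r^2-1)/2^n) := by
          apply mul_le_mul_of_nonneg_left _ (by positivity)
          rw [hddef]; exact h1
      _ = r^2 - 1 := by field_simp
  -- the grid of candidate standard deviations
  set K : ℕ := 2^(B+1) + 1 with hKdef
  set σf : Fin K → ℝ := fun k => σ₀ * d * ((100:ℝ)⁻¹)^(k:ℕ) with hσfdef
  have hσf0 : ∀ k, 0 < σf k := by
    intro k; rw [hσfdef]; positivity
  have hσfle : ∀ k, σf k ≤ σ₀ * d := by
    intro k
    rw [hσfdef]
    calc σ₀ * d * ((100:ℝ)⁻¹)^(k:ℕ) ≤ σ₀ * d * 1 := by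
          apply mul_le_mul_of_nonneg_left _ (by positivity)
          exact pow_le_one₀ (by norm_num) (by norm_num)
      _ = σ₀ * d := mul_one _
  have hσratio : ∀ k l : Fin K, k < l → 100 * σf l ≤ σf k := by
    intro k l hkl
    have hkl' : (k:ℕ) + 1 ≤ (l:ℕ) := hkl
    have h1 : ((100:ℝ)⁻¹)^(l:ℕ) * 100 ≤ ((100:ℝ)⁻¹)^(k:ℕ) := by
      calc ((100:ℝ)⁻¹)^(l:ℕ) * 100 ≤ ((100:ℝ)⁻¹)^((k:ℕ)+1) * 100 := by
            apply mul_le_mul_of_nonneg_right _ (by norm_num)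
            exact pow_le_pow_of_le_one (by norm_num) (by norm_num) hkl'
        _ = ((100:ℝ)⁻¹)^(k:ℕ) := by rw [pow_succ]; field_simp
    rw [hσfdef]
    calc 100 * (σ₀ * d * ((100:ℝ)⁻¹)^(l:ℕ)) = σ₀ * d * (((100:ℝ)⁻¹)^(l:ℕ) * 100) := by ring
      _ ≤ σ₀ * d * ((100:ℝ)⁻¹)^(k:ℕ) := by
          apply mul_le_mul_of_nonneg_left h1 (by positivity)
  -- witness intervals
  set sI : Fin K → Set ℝ := fun m => Ioo (-(2*σf m)) (2*σf m) with hsIdef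
  -- observed-measure functionals
  set F : (Fin B → Bool) → Fin K → (Fin n → ℝ) → ℝ := fun b m x =>
    (∫⁻ y in sI m, ENNReal.ofReal
      (gaussianPDFReal (A b x).1 (((A b x).2^2).toNNReal) y)).toReal with hFdef
  have hF : ∀ b m x, F b m x
      = ((gaussianReal (A b x).1 (((A b x).2^2).toNNReal)) (sI m)).toReal := by
    intro b m x
    rw [gaussianReal_apply _ (sq_toNNReal_ne_zero (hApos b x)), hFdef]
    rfl
  have hFmeas : ∀ b m, Measurable (F b m) := by
    intro b m
    rw [hFdef]
    exact ENNReal.measurable_toReal.comp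
      ((measurable_gaussObs (measurableSet_Ioo (a := -(2*σf m)) (b := 2*σf m))).comp (hAmeas b))
  -- the bad sets
  set D : Fin K → (Fin B → Bool) → Set (Fin n → ℝ) := fun k b =>
    ⋂ m : Fin K, {x | |F b m x
      - ((gaussianReal 0 ((σf k^2).toNNReal)) (sI m)).toReal| ≤ 1/200} with hDdef
  have hDmeas : ∀ k b, MeasurableSet (D k b) := by
    intro k b
    rw [hDdef]
    apply MeasurableSet.iInter
    intro m
    have heq : {x | |F b m x - ((gaussianReal 0 ((σf k^2).toNNReal)) (sI m)).toReal| ≤ 1/200}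
        = F b m ⁻¹' (Metric.closedBall (((gaussianReal 0 ((σf k^2).toNNReal)) (sI m)).toReal)
            (1/200)) := by
      ext x
      simp [Metric.mem_closedBall, Real.dist_eq]
    rw [heq]
    exact (hFmeas b m) measurableSet_closedBall
  have hdisj : ∀ b, Pairwise (Function.onFun Disjoint fun k => D k b) := by
    intro b
    have key : ∀ k l : Fin K, k < l → ∀ x, x ∈ D k b → x ∈ D l b → False := by
      intro k l hkl x hxk hxl
      rw [hDdef, mem_iInter] at hxk hxl
      have h1 := hxk l
      have h2 := hxl l
      rw [mem_setOf_eq] at h1 h2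
      have h3 := gauss_gap (hσf0 l) (hσratio k l hkl)
      rw [hsIdef] at h1 h2
      rw [abs_le] at h1 h2
      linarith [h1.1, h1.2, h2.1, h2.2, h3]
    intro k l hkl
    rcases lt_or_gt_of_ne hkl with h | h
    · rw [Function.onFun, Set.disjoint_left]
      intro x hx1 hx2; exact key k l h x hx1 hx2
    · rw [Function.onFun, Set.disjoint_left]
      intro x hx1 hx2; exact key l k h x hx2 hx1
  -- the reference product measure
  set Qn : Measure (Fin n → ℝ) :=
    Measure.pi (fun _ : Fin n => gaussianReal 0 ((σ₀^2).toNNReal)) with hQndef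
  have hQnprob : IsProbabilityMeasure Qn := by
    rw [hQndef]; infer_instance
  have hcard : Fintype.card (Fin B → Bool) = 2^B := by simp
  -- pigeonhole: some k has small bad-set mass
  have hcount : ∃ k : Fin K, Qn (⋃ b, D k b) ≤ 1/2 := by
    by_contra hcon
    push_neg at hcon
    have hsum1 : ∀ b, ∑ k : Fin K, Qn (D k b) ≤ 1 := by
      intro b
      rw [← tsum_fintype (L := SummationFilter.unconditional _), ← measure_iUnion (hdisj b) (fun k => hDmeas k b)]
      exact prob_le_one
    have htot : ∑ k : Fin K, Qn (⋃ b, D k b) ≤ ((2^B : ℕ) : ℝ≥0∞) := by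
      calc ∑ k : Fin K, Qn (⋃ b, D k b)
          ≤ ∑ k : Fin K, ∑ b : Fin B → Bool, Qn (D k b) :=
            Finset.sum_le_sum fun k _ => measure_iUnion_fintype_le _ _
        _ = ∑ b : Fin B → Bool, ∑ k : Fin K, Qn (D k b) := Finset.sum_comm
        _ ≤ ∑ _b : Fin B → Bool, (1:ℝ≥0∞) := Finset.sum_le_sum fun b _ => hsum1 b
        _ = ((2^B : ℕ) : ℝ≥0∞) := by
            rw [Finset.sum_const, Finset.card_univ, hcard, nsmul_eq_mul, mul_one]
    have hlow : (K:ℝ≥0∞) * (1/2) ≤ ∑ k : Fin K, Qn (⋃ b, D k b) := by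
      calc (K:ℝ≥0∞) * (1/2) = ∑ _k : Fin K, (1/2 : ℝ≥0∞) := by
            rw [Finset.sum_const, Finset.card_univ, Fintype.card_fin, nsmul_eq_mul]
        _ ≤ ∑ k : Fin K, Qn (⋃ b, D k b) := Finset.sum_le_sum fun k _ => (hcon k).le
    have hKK : (K:ℝ≥0∞) ≤ ((2^(B+1) : ℕ) : ℝ≥0∞) := by
      have h2 : (K:ℝ≥0∞) * (1/2) * 2 ≤ ((2^B : ℕ) : ℝ≥0∞) * 2 :=
        mul_le_mul_left (hlow.trans htot) 2
      have h3 : (K:ℝ≥0∞) * (1/2) * 2 = (K:ℝ≥0∞) := by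
        rw [mul_assoc, one_div, ENNReal.inv_mul_cancel (by norm_num) (by norm_num), mul_one]
      have h4 : ((2^B : ℕ) : ℝ≥0∞) * 2 = ((2^(B+1) : ℕ) : ℝ≥0∞) := by
        push_cast
        rw [pow_succ]
      rw [h3, h4] at h2
      exact h2
    have hKK' : K ≤ 2^(B+1) := by exact_mod_cast hKK
    rw [hKdef] at hKK'
    omega
  obtain ⟨k, hk⟩ := hcount
  -- the ratio argument
  set τ : ℝ := Real.sqrt (σf k^2 + σ₀^2) with hτdef
  have hτge : σ₀ ≤ τ := by
    rw [hτdef, Real.le_sqrt hσ₀.le (by positivity)]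
    nlinarith [hσf0 k]
  have hτpos : 0 < τ := lt_of_lt_of_le hσ₀ hτge
  have hτsq : ((τ^2).toNNReal) = ((σf k^2 + σ₀^2).toNNReal) := by
    rw [hτdef, Real.sq_sqrt (by positivity)]
  have hmono := gauss_le_smul hσ₀ hτge 0
  rw [hτsq] at hmono
  have hQP := my_pi_le_smul_pi n (ENNReal.ofReal (τ/σ₀)) ENNReal.ofReal_ne_top hmono
  -- numeric bound (τ/σ₀)^n ≤ r
  have hcb : (τ/σ₀)^n ≤ r := by
    have h1 : (τ/σ₀)^2 ≤ 1 + d^2 := by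
      rw [div_pow, hτdef, Real.sq_sqrt (by positivity), div_le_iff₀ (by positivity)]
      have h2 : σf k ≤ σ₀ * d := hσfle k
      nlinarith [hσf0 k]
    have h2 : ((τ/σ₀)^n)^2 ≤ r^2 := by
      rw [← pow_mul, mul_comm n 2, pow_mul]
      calc ((τ/σ₀)^2)^n ≤ (1+d^2)^n := pow_le_pow_left₀ (by positivity) h1 n
        _ ≤ 1 + (2^n - 1)*d^2 := one_add_pow_le (by positivity) (by nlinarith) n
        _ ≤ 1 + 2^n * d := by
            have h5 : (1:ℝ) ≤ 2^n := one_le_pow₀ (by norm_num)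
            nlinarith [mul_nonneg (by linarith : (0:ℝ) ≤ (2:ℝ)^n - 1)
              (by nlinarith : (0:ℝ) ≤ d - d^2)]
        _ ≤ r^2 := by linarith
    have h3 : (0:ℝ) ≤ (τ/σ₀)^n := by positivity
    calc (τ/σ₀)^n = Real.sqrt (((τ/σ₀)^n)^2) := (Real.sqrt_sq h3).symm
      _ ≤ Real.sqrt (r^2) := Real.sqrt_le_sqrt h2
      _ = r := Real.sqrt_sq hr0.le
  -- the event has probability ≥ 1/2 under Qn
  have hEc : (⋃ b, D k b)ᶜ ⊆
      {x : Fin n → ℝ |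
        1 / 200 ≤ ⨅ b : Fin B → Bool,
          tvDist (gaussianReal 0 ((σf k ^ 2).toNNReal))
            (gaussianReal (A b x).1 (((A b x).2 ^ 2).toNNReal))} := by
    intro x hx
    simp only [mem_compl_iff, mem_iUnion, not_exists] at hx
    rw [mem_setOf_eq]
    refine le_ciInf fun b => ?_
    have hxb := hx b
    rw [hDdef, mem_iInter] at hxb
    push_neg at hxb
    obtain ⟨m, hm⟩ := hxb
    rw [mem_setOf_eq, not_le] at hm
    have htv := abs_sub_le_tvDist (gaussianReal 0 ((σf k^2).toNNReal))
      (gaussianReal (A b x).1 (((A b x).2^2).toNNReal))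
      (measurableSet_Ioo (a := -(2*σf m)) (b := 2*σf m))
    rw [hF b m x, abs_sub_comm] at hm
    rw [hsIdef] at hm
    linarith [htv, hm]
  have hUm : MeasurableSet (⋃ b, D k b) := MeasurableSet.iUnion fun b => hDmeas k b
  have hQE : (1:ℝ≥0∞)/2 ≤ Qn
      {x : Fin n → ℝ |
        1 / 200 ≤ ⨅ b : Fin B → Bool,
          tvDist (gaussianReal 0 ((σf k ^ 2).toNNReal))
            (gaussianReal (A b x).1 (((A b x).2 ^ 2).toNNReal))} := by
    refine le_trans ?_ (measure_mono hEc)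
    rw [prob_compl_eq_one_sub hUm]
    calc (1:ℝ≥0∞)/2 = 1 - 1/2 := by
          rw [one_div, ENNReal.one_sub_inv_two]
      _ ≤ 1 - Qn (⋃ b, D k b) := tsub_le_tsub_left hk 1
  -- transfer to the smoothed product measure
  have hPE' := Measure.le_iff'.1 hQP
    {x : Fin n → ℝ |
      1 / 200 ≤ ⨅ b : Fin B → Bool,
        tvDist (gaussianReal 0 ((σf k ^ 2).toNNReal))
          (gaussianReal (A b x).1 (((A b x).2 ^ 2).toNNReal))}
  rw [Measure.smul_apply, smul_eq_mul] at hPE'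
  rw [hQndef] at hQE
  have h5 : (1:ℝ≥0∞)/2 ≤ ENNReal.ofReal r *
      ((Measure.pi fun _ : Fin n => gaussianReal 0 ((σf k ^ 2 + σ₀ ^ 2).toNNReal))
        {x : Fin n → ℝ |
          1 / 200 ≤ ⨅ b : Fin B → Bool,
            tvDist (gaussianReal 0 ((σf k ^ 2).toNNReal))
              (gaussianReal (A b x).1 (((A b x).2 ^ 2).toNNReal))}) := by
    refine le_trans (hQE.trans hPE') ?_
    apply mul_le_mul_left
    rw [← ENNReal.ofReal_pow (by positivity)]
    exact ENNReal.ofReal_le_ofReal hcb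
  have h6 : (1:ℝ)/2 ≤ r *
      ((Measure.pi fun _ : Fin n => gaussianReal 0 ((σf k ^ 2 + σ₀ ^ 2).toNNReal))
        {x : Fin n → ℝ |
          1 / 200 ≤ ⨅ b : Fin B → Bool,
            tvDist (gaussianReal 0 ((σf k ^ 2).toNNReal))
              (gaussianReal (A b x).1 (((A b x).2 ^ 2).toNNReal))}).toReal := by
    have hfin : ENNReal.ofReal r *
        ((Measure.pi fun _ : Fin n => gaussianReal 0 ((σf k ^ 2 + σ₀ ^ 2).toNNReal))
          {x : Fin n → ℝ |
            1 / 200 ≤ ⨅ b : Fin B → Bool,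
              tvDist (gaussianReal 0 ((σf k ^ 2).toNNReal))
                (gaussianReal (A b x).1 (((A b x).2 ^ 2).toNNReal))}) ≠ ⊤ :=
      ENNReal.mul_ne_top ENNReal.ofReal_ne_top (measure_ne_top _ _)
    have h7 := ENNReal.toReal_mono hfin h5
    rw [ENNReal.toReal_mul, ENNReal.toReal_ofReal hr0.le] at h7
    have h8 : ((1:ℝ≥0∞)/2).toReal = (1/2:ℝ) := by norm_num
    rw [h8] at h7
    exact h7
  have h7 : 1/(2*r) ≤
      ((Measure.pi fun _ : Fin n => gaussianReal 0 ((σf k ^ 2 + σ₀ ^ 2).toNNReal))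
        {x : Fin n → ℝ |
          1 / 200 ≤ ⨅ b : Fin B → Bool,
            tvDist (gaussianReal 0 ((σf k ^ 2).toNNReal))
              (gaussianReal (A b x).1 (((A b x).2 ^ 2).toNNReal))}).toReal := by
    rw [div_le_iff₀ (by positivity)]
    nlinarith [h6]
  -- plug into the supremum
  have hsup1 : ∀ μstar σstar : ℝ,
      (⨆ (_ : 0 < σstar),
        ((Measure.pi fun _ : Fin n =>
            gaussianReal μstar ((σstar ^ 2 + σ₀ ^ 2).toNNReal))
          {x : Fin n → ℝ |
            1 / 200 ≤ ⨅ b : Fin B → Bool,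
              tvDist (gaussianReal μstar ((σstar ^ 2).toNNReal))
                (gaussianReal (A b x).1 (((A b x).2 ^ 2).toNNReal))}).toReal) ≤ 1 := by
    intro μstar σstar
    by_cases h : 0 < σstar
    · rw [ciSup_pos h]
      exact hgle μstar σstar
    · haveI : IsEmpty (0 < σstar) := ⟨h⟩
      rw [Real.iSup_of_isEmpty]
      norm_num
  have hb1 : BddAbove (Set.range fun σstar : ℝ =>
      ⨆ (_ : 0 < σstar),
        ((Measure.pi fun _ : Fin n =>
            gaussianReal (0:ℝ) ((σstar ^ 2 + σ₀ ^ 2).toNNReal))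
          {x : Fin n → ℝ |
            1 / 200 ≤ ⨅ b : Fin B → Bool,
              tvDist (gaussianReal (0:ℝ) ((σstar ^ 2).toNNReal))
                (gaussianReal (A b x).1 (((A b x).2 ^ 2).toNNReal))}).toReal) := by
    refine ⟨1, ?_⟩
    rintro y ⟨σstar, rfl⟩
    exact hsup1 0 σstar
  have hb2 : BddAbove (Set.range fun μstar : ℝ =>
      ⨆ (σstar : ℝ) (_ : 0 < σstar),
        ((Measure.pi fun _ : Fin n =>
            gaussianReal μstar ((σstar ^ 2 + σ₀ ^ 2).toNNReal))
          {x : Fin n → ℝ |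
            1 / 200 ≤ ⨅ b : Fin B → Bool,
              tvDist (gaussianReal μstar ((σstar ^ 2).toNNReal))
                (gaussianReal (A b x).1 (((A b x).2 ^ 2).toNNReal))}).toReal) := by
    refine ⟨1, ?_⟩
    rintro y ⟨μstar, rfl⟩
    exact ciSup_le fun σstar => hsup1 μstar σstar
  calc 1/(2*r)
      ≤ ((Measure.pi fun _ : Fin n => gaussianReal (0:ℝ) ((σf k ^ 2 + σ₀ ^ 2).toNNReal))
        {x : Fin n → ℝ |
          1 / 200 ≤ ⨅ b : Fin B → Bool,
            tvDist (gaussianReal (0:ℝ) ((σf k ^ 2).toNNReal))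
              (gaussianReal (A b x).1 (((A b x).2 ^ 2).toNNReal))}).toReal := h7
    _ = ⨆ (_ : 0 < σf k),
        ((Measure.pi fun _ : Fin n => gaussianReal (0:ℝ) ((σf k ^ 2 + σ₀ ^ 2).toNNReal))
        {x : Fin n → ℝ |
          1 / 200 ≤ ⨅ b : Fin B → Bool,
            tvDist (gaussianReal (0:ℝ) ((σf k ^ 2).toNNReal))
              (gaussianReal (A b x).1 (((A b x).2 ^ 2).toNNReal))}).toReal :=
        by
          haveI : Nonempty (0 < σf k) := ⟨hσf0 k⟩
          exact ciSup_const.symm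
    _ ≤ ⨆ (σstar : ℝ) (_ : 0 < σstar),
        ((Measure.pi fun _ : Fin n =>
            gaussianReal (0:ℝ) ((σstar ^ 2 + σ₀ ^ 2).toNNReal))
          {x : Fin n → ℝ |
            1 / 200 ≤ ⨅ b : Fin B → Bool,
              tvDist (gaussianReal (0:ℝ) ((σstar ^ 2).toNNReal))
                (gaussianReal (A b x).1 (((A b x).2 ^ 2).toNNReal))}).toReal :=
        le_ciSup hb1 (σf k)
    _ ≤ ⨆ (μstar : ℝ) (σstar : ℝ) (_ : 0 < σstar),
        ((Measure.pi fun _ : Fin n =>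
            gaussianReal μstar ((σstar ^ 2 + σ₀ ^ 2).toNNReal))
          {x : Fin n → ℝ |
            1 / 200 ≤ ⨅ b : Fin B → Bool,
              tvDist (gaussianReal μstar ((σstar ^ 2).toNNReal))
                (gaussianReal (A b x).1 (((A b x).2 ^ 2).toNNReal))}).toReal :=
        le_ciSup hb2 0
end
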